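/- arXiv:math/0502484 — 4 statements merged into one kernel-verified Lean document; each statement's English description precedes it below -/
import Mathlib

section
/- Suppose q ∈ (0,1] satisfies q = Σ_{i=1}^∞ 2^{-n_i} with n_1 ≤ n_2 ≤ ... and n_i < n_{i+2} for all i. Then Σ_{i=1}^∞ n_i 2^{-n_i} ≤ -q log q / log 2 + 6q. -/
open Real Function


lemma aux_f_anti {k d : ℕ} (hk : 1 ≤ k) (hkd : k ≤ d) :
    (d : ℝ) * ((2:ℝ) ^ d)⁻¹ ≤ (k : ℝ) * ((2:ℝ) ^ k)⁻¹ := by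
  have hnat : d * 2 ^ k ≤ k * 2 ^ d := by
    obtain ⟨j, rfl⟩ := Nat.exists_eq_add_of_le hkd
    have h1 : k + j ≤ k * 2 ^ j := by
      calc k + j ≤ k + k * j := by nlinarith
        _ = k * (j + 1) := by ring
        _ ≤ k * 2 ^ j := Nat.mul_le_mul_left k (Nat.succ_le_of_lt (Nat.lt_two_pow_self (n := j)))
    calc (k + j) * 2 ^ k ≤ (k * 2 ^ j) * 2 ^ k := Nat.mul_le_mul_right _ h1
      _ = k * 2 ^ (k + j) := by rw [pow_add]; ring
  have h2k : (0:ℝ) < 2 ^ k := by positivity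
  have h2d : (0:ℝ) < 2 ^ d := by positivity
  rw [← div_eq_mul_inv, ← div_eq_mul_inv, div_le_div_iff₀ h2d h2k]
  exact_mod_cast hnat

lemma aux_sum_f : HasSum (fun k : ℕ => (k : ℝ) * ((2:ℝ) ^ k)⁻¹) 2 := by
  have h := hasSum_coe_mul_geometric_of_norm_lt_one (r := (2:ℝ)⁻¹) (by norm_num)
  have h2 : ((2:ℝ)⁻¹ / (1 - 2⁻¹) ^ 2) = 2 := by norm_num
  rw [h2] at h
  convert h using 2 with k
  · rfl
  rw [inv_pow]

lemma aux_sum_fmax :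
    HasSum (fun k : ℕ => ((max k 1 : ℕ) : ℝ) * ((2:ℝ) ^ (max k 1 : ℕ))⁻¹) (5/2) := by
  classical
  have h := aux_sum_f.update 0 (2⁻¹)
  have heq : update (fun k : ℕ => (k : ℝ) * ((2:ℝ) ^ k)⁻¹) 0 2⁻¹
      = fun k : ℕ => ((max k 1 : ℕ) : ℝ) * ((2:ℝ) ^ (max k 1 : ℕ))⁻¹ := by
    funext k
    match k with
    | 0 => simp [update]
    | k + 1 =>
      have hm : max (k + 1) 1 = k + 1 := by omega
      simp [update, hm]
  rw [heq] at h
  convert h using 1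
  · rfl
  norm_num

lemma aux_sum_h :
    HasSum (fun i : ℕ => ((max (i/2) 1 : ℕ) : ℝ) * ((2:ℝ) ^ (max (i/2) 1 : ℕ))⁻¹) 5 := by
  have e1 : ∀ k : ℕ, (2*k)/2 = k := fun k => by omega
  have e2 : ∀ k : ℕ, (2*k+1)/2 = k := fun k => by omega
  set h : ℕ → ℝ := fun i => ((max (i/2) 1 : ℕ) : ℝ) * ((2:ℝ) ^ (max (i/2) 1 : ℕ))⁻¹ with hh
  have he : HasSum (fun k => h (2*k)) (5/2) := by
    simp only [hh, e1]; exact aux_sum_fmax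
  have ho : HasSum (fun k => h (2*k+1)) (5/2) := by
    simp only [hh, e2]; exact aux_sum_fmax
  have := he.even_add_odd ho
  norm_num at this
  exact this

lemma aux_sum_geo4 : HasSum (fun i : ℕ => ((2:ℝ) ^ (i/2))⁻¹) 4 := by
  have e1 : ∀ k : ℕ, (2*k)/2 = k := fun k => by omega
  have e2 : ∀ k : ℕ, (2*k+1)/2 = k := fun k => by omega
  have hg : HasSum (fun k : ℕ => ((2:ℝ) ^ k)⁻¹) 2 := by
    have h := hasSum_geometric_of_lt_one (r := (2:ℝ)⁻¹) (by norm_num) (by norm_num)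
    have h2 : (1 - (2:ℝ)⁻¹)⁻¹ = 2 := by norm_num
    rw [h2] at h
    convert h using 2 with k
    rw [inv_pow]
  set g : ℕ → ℝ := fun i => ((2:ℝ) ^ (i/2))⁻¹ with hgdef
  have he : HasSum (fun k => g (2*k)) 2 := by simp only [hgdef, e1]; exact hg
  have ho : HasSum (fun k => g (2*k+1)) 2 := by simp only [hgdef, e2]; exact hg
  have := he.even_add_odd ho
  norm_num at this
  exact this

lemma aux_key (S : ℝ) (hS1 : 1 ≤ S) (hS4 : S ≤ 4) :
    5 ≤ S * (6 - Real.log S / Real.log 2) := by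
  have hl2 : (0:ℝ) < Real.log 2 := Real.log_pos (by norm_num)
  rcases le_total S 2 with h | h
  · have hlog : Real.log S ≤ Real.log 2 := Real.log_le_log (by linarith) h
    have h1 : Real.log S / Real.log 2 ≤ 1 := (div_le_one hl2).mpr hlog
    have h2 : 0 ≤ Real.log S / Real.log 2 := div_nonneg (Real.log_nonneg hS1) hl2.le
    nlinarith
  · have hlog : Real.log S ≤ Real.log 4 := Real.log_le_log (by linarith) hS4
    have h4 : Real.log 4 = 2 * Real.log 2 := by
      rw [show (4:ℝ) = 2^2 by norm_num, Real.log_pow]; norm_num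
    have h1 : Real.log S / Real.log 2 ≤ 2 := by
      rw [div_le_iff₀ hl2]; rw [h4] at hlog; linarith
    nlinarith

/-- If `q ∈ (0,1]` satisfies `q = ∑_i 2^{-n i}` with `n` nondecreasing and each value
appearing at most twice (`n i < n (i+2)`), then
`∑_i n i * 2^{-n i} ≤ -q * log q / log 2 + 6 q`. -/
theorem stmt3 (q : ℝ) (hq0 : 0 < q) (hq1 : q ≤ 1) (n : ℕ → ℕ)
    (hmono : Monotone n) (htwice : ∀ i, n i < n (i + 2))
    (hsum : HasSum (fun i => ((2:ℝ) ^ n i)⁻¹) q) :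
    ∑' i, (n i : ℝ) * ((2:ℝ) ^ n i)⁻¹ ≤ -q * Real.log q / Real.log 2 + 6 * q := by
  set m := n 0 with hm0
  have hm : ∀ i, m ≤ n i := fun i => hmono (Nat.zero_le i)
  have hfloor : ∀ i, m + i / 2 ≤ n i := by
    intro i
    induction i using Nat.strong_induction_on with
    | _ i ih =>
      match i with
      | 0 => simpa using hm 0
      | 1 => simpa using hm 1
      | (i + 2) =>
        have h1 := ih i (by omega)
        have h2 := htwice i
        omega
  have h2m : (0:ℝ) < 2 ^ m := by positivity
  have pow_split : ∀ i, ((2:ℝ) ^ n i)⁻¹ = ((2:ℝ) ^ m)⁻¹ * ((2:ℝ) ^ (n i - m))⁻¹ := by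
    intro i
    have h := Nat.add_sub_cancel' (hm i)
    rw [← h, pow_add, mul_inv, Nat.add_sub_cancel_left]
  have hS : HasSum (fun i => ((2:ℝ) ^ (n i - m))⁻¹) (2 ^ m * q) := by
    have h := hsum.mul_left ((2:ℝ) ^ m)
    convert h using 1
    · rfl
    funext i
    rw [pow_split i]
    field_simp
  set S : ℝ := 2 ^ m * q with hSdef
  have hS1 : 1 ≤ S := by
    have h := le_hasSum hS 0 (fun i _ => by positivity)
    simpa [← hm0] using h
  have hS4 : S ≤ 4 := by
    refine hasSum_le (fun i => ?_) hS aux_sum_geo4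
    have hle : i / 2 ≤ n i - m := by have := hfloor i; omega
    exact inv_anti₀ (by positivity) (pow_le_pow_right₀ one_le_two hle)
  set t : ℕ → ℝ := fun i => ((n i - m : ℕ) : ℝ) * ((2:ℝ) ^ (n i - m))⁻¹ with htdef
  have ht_nonneg : ∀ i, 0 ≤ t i := fun i => by positivity
  have hth : ∀ i, t i ≤ ((max (i/2) 1 : ℕ) : ℝ) * ((2:ℝ) ^ (max (i/2) 1 : ℕ))⁻¹ := by
    intro i
    by_cases hd : n i - m = 0
    · have ht0 : t i = 0 := by simp [htdef, hd]
      rw [ht0]; positivity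
    · exact aux_f_anti (le_max_right _ _)
        (by have := hfloor i; omega)
  have hsummable_t : Summable t :=
    Summable.of_nonneg_of_le ht_nonneg hth aux_sum_h.summable
  set T : ℝ := ∑' i, t i with hTdef
  have hT5 : T ≤ 5 :=
    (Summable.tsum_le_tsum hth hsummable_t aux_sum_h.summable).trans_eq aux_sum_h.tsum_eq
  have hdecomp : ∀ i, (n i : ℝ) * ((2:ℝ) ^ n i)⁻¹
      = (m : ℝ) * ((2:ℝ) ^ n i)⁻¹ + ((2:ℝ) ^ m)⁻¹ * t i := by
    intro i
    have hc : (n i : ℝ) = (m : ℝ) + ((n i - m : ℕ) : ℝ) := by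
      rw [← Nat.cast_add, Nat.add_sub_cancel' (hm i)]
    rw [hc, pow_split i, htdef]
    ring
  have total : HasSum (fun i => (n i : ℝ) * ((2:ℝ) ^ n i)⁻¹)
      ((m : ℝ) * q + ((2:ℝ) ^ m)⁻¹ * T) := by
    have h := (hsum.mul_left (m : ℝ)).add (hsummable_t.hasSum.mul_left ((2:ℝ) ^ m)⁻¹)
    convert h using 1
    · rfl
    funext i
    exact hdecomp i
  rw [total.tsum_eq]
  -- now the analytic part
  have hl2 : (0:ℝ) < Real.log 2 := Real.log_pos (by norm_num)
  have hq_eq : q = ((2:ℝ) ^ m)⁻¹ * S := by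
    rw [hSdef]; field_simp
  have hS0 : (0:ℝ) < S := by linarith
  have hlogq : Real.log q = Real.log S - (m : ℝ) * Real.log 2 := by
    rw [hq_eq, Real.log_mul (by positivity) (ne_of_gt hS0), Real.log_inv, Real.log_pow]
    push_cast; ring
  have key := aux_key S hS1 hS4
  have h5 : ((2:ℝ) ^ m)⁻¹ * T ≤ ((2:ℝ) ^ m)⁻¹ * (S * (6 - Real.log S / Real.log 2)) :=
    mul_le_mul_of_nonneg_left (hT5.trans key) (by positivity)
  have hRHS : -q * Real.log q / Real.log 2 + 6 * q
      = (m : ℝ) * q + ((2:ℝ) ^ m)⁻¹ * (S * (6 - Real.log S / Real.log 2)) := by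
    rw [hlogq]
    rw [hq_eq]
    field_simp
    ring
  rw [hRHS]
  linarith
end

section
/- If X_1, X_2, ... are i.i.d. random variables with exponential tails and T is an ℕ-valued random variable (on the same space, not necessarily independent of the X_i) with exponential tails, then the random sum S_T = Σ_{k=1}^T X_k has exponential tails. -/
open MeasureTheory ProbabilityTheory

/-- A real random variable `W` has exponential tails if `P(|W| ≥ n) ≤ c · d^n` for some
`c > 0`, `0 < d < 1`, and all naturals `n`. -/
def ExpTails {Ω : Type*} [MeasurableSpace Ω] (P : Measure Ω) (W : Ω → ℝ) : Prop :=
  ∃ c : ℝ, 0 < c ∧ ∃ d : ℝ, 0 < d ∧ d < 1 ∧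
    ∀ n : ℕ, P {ω | (n : ℝ) ≤ |W ω|} ≤ ENNReal.ofReal (c * d ^ n)

/-- Exponential tails give integrability of `exp (t * |W|)` for suitable `t`. -/
lemma integrable_exp_abs_of_tails {Ω : Type*} [MeasurableSpace Ω] (P : Measure Ω)
    [IsProbabilityMeasure P] (W : Ω → ℝ) (hW : Measurable W) {c d t : ℝ}
    (hc : 0 < c) (hd : 0 < d) (ht : 0 < t) (hdt : Real.exp t * d < 1)
    (htail : ∀ n : ℕ, P {ω | (n : ℝ) ≤ |W ω|} ≤ ENNReal.ofReal (c * d ^ n)) :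
    Integrable (fun ω => Real.exp (t * |W ω|)) P := by
  have hmeas : Measurable (fun ω => Real.exp (t * |W ω|)) := (hW.abs.const_mul t).exp
  refine ⟨hmeas.aestronglyMeasurable, ?_⟩
  rw [hasFiniteIntegral_iff_ofReal (Filter.Eventually.of_forall fun ω => (Real.exp_pos _).le)]
  have hsets : ∀ n : ℕ, MeasurableSet {ω | (n : ℝ) ≤ |W ω|} := fun n =>
    measurableSet_le measurable_const hW.abs
  have hpt : ∀ ω, ENNReal.ofReal (Real.exp (t * |W ω|)) ≤
      ∑' n : ℕ, Set.indicator {ω | (n : ℝ) ≤ |W ω|}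
        (fun _ => ENNReal.ofReal (Real.exp (t * (n + 1)))) ω := by
    intro ω
    set N := ⌊|W ω|⌋₊ with hN
    have hmem : ω ∈ {ω | (N : ℝ) ≤ |W ω|} := by
      simp only [Set.mem_setOf_eq, hN]
      exact Nat.floor_le (abs_nonneg _)
    have hub : Real.exp (t * |W ω|) ≤ Real.exp (t * (N + 1)) := by
      apply Real.exp_le_exp.2
      have : |W ω| < N + 1 := Nat.lt_floor_add_one _
      nlinarith
    calc ENNReal.ofReal (Real.exp (t * |W ω|))
        ≤ Set.indicator {ω | (N : ℝ) ≤ |W ω|}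
            (fun _ => ENNReal.ofReal (Real.exp (t * (N + 1)))) ω := by
          rw [Set.indicator_of_mem hmem]
          exact ENNReal.ofReal_le_ofReal hub
      _ ≤ _ := ENNReal.le_tsum N
  calc ∫⁻ ω, ENNReal.ofReal (Real.exp (t * |W ω|)) ∂P
      ≤ ∫⁻ ω, ∑' n : ℕ, Set.indicator {ω | (n : ℝ) ≤ |W ω|}
          (fun _ => ENNReal.ofReal (Real.exp (t * (n + 1)))) ω ∂P :=
        lintegral_mono hpt
    _ = ∑' n : ℕ, ∫⁻ ω, Set.indicator {ω | (n : ℝ) ≤ |W ω|}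
          (fun _ => ENNReal.ofReal (Real.exp (t * (n + 1)))) ω ∂P :=
        lintegral_tsum fun n =>
          ((measurable_const.indicator (hsets n))).aemeasurable
    _ = ∑' n : ℕ, ENNReal.ofReal (Real.exp (t * (n + 1))) * P {ω | (n : ℝ) ≤ |W ω|} := by
        simp_rw [lintegral_indicator_const (hsets _)]
    _ ≤ ∑' n : ℕ, ENNReal.ofReal ((c * Real.exp t) * (Real.exp t * d) ^ n) := by
        refine ENNReal.tsum_le_tsum fun n => ?_
        calc ENNReal.ofReal (Real.exp (t * (n + 1))) * P {ω | (n : ℝ) ≤ |W ω|}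
            ≤ ENNReal.ofReal (Real.exp (t * (n + 1))) * ENNReal.ofReal (c * d ^ n) := by
              gcongr; exact htail n
          _ = ENNReal.ofReal (Real.exp (t * (n + 1)) * (c * d ^ n)) :=
              (ENNReal.ofReal_mul (Real.exp_pos _).le).symm
          _ = ENNReal.ofReal ((c * Real.exp t) * (Real.exp t * d) ^ n) := by
              congr 1
              rw [show t * ((n : ℝ) + 1) = (n : ℝ) * t + t by ring, Real.exp_add,
                Real.exp_nat_mul, mul_pow]
              ring
    _ < ⊤ := by
        have hnn : ∀ n : ℕ, 0 ≤ (c * Real.exp t) * (Real.exp t * d) ^ n := fun n => by positivity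
        have hsum : Summable (fun n : ℕ => (c * Real.exp t) * (Real.exp t * d) ^ n) :=
          (summable_geometric_of_lt_one (by positivity) hdt).mul_left _
        rw [← ENNReal.ofReal_tsum_of_nonneg hnn hsum]
        exact ENNReal.ofReal_lt_top

set_option maxHeartbeats 1200000 in
/-- If `X 0, X 1, ...` are i.i.d. with exponential tails and `T` is an `ℕ`-valued random
variable (on the same space, not necessarily independent of the `X i`) with exponential
tails, then the random sum `S_T = ∑_{k<T} X k` has exponential tails. -/
theorem stmt13 {Ω : Type*} [MeasurableSpace Ω] (P : Measure Ω) [IsProbabilityMeasure P]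
    (X : ℕ → Ω → ℝ) (hmeas : ∀ i, Measurable (X i))
    (hindep : iIndepFun X P)
    (hident : ∀ i, IdentDistrib (X i) (X 0) P P)
    (htails : ExpTails P (X 0))
    (T : Ω → ℕ) (hT : ExpTails P (fun ω => (T ω : ℝ))) :
    ExpTails P (fun ω => ∑ k ∈ Finset.range (T ω), X k ω) := by
  obtain ⟨c, hc, d, hd0, hd1, htail⟩ := htails
  obtain ⟨cT, hcT, dT, hdT0, hdT1, htailT⟩ := hT
  -- choose t with exp t * d < 1
  set s := Real.sqrt d with hs_def
  have hs0 : 0 < s := Real.sqrt_pos.2 hd0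
  have hs1 : s < 1 := by
    rw [show (1 : ℝ) = Real.sqrt 1 by simp]
    exact Real.sqrt_lt_sqrt hd0.le hd1
  set t : ℝ := -Real.log s with ht_def
  have ht : 0 < t := by
    have := Real.log_neg hs0 hs1
    linarith
  have hexp_t : Real.exp t = s⁻¹ := by
    rw [ht_def, Real.exp_neg, Real.exp_log hs0]
  have hdt : Real.exp t * d < 1 := by
    have hds : d = s * s := (Real.mul_self_sqrt hd0.le).symm
    rw [hexp_t, hds, inv_mul_cancel_left₀ hs0.ne']
    exact hs1
  set Y : ℕ → Ω → ℝ := fun i ω => |X i ω| with hY_def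
  have hYmeas : ∀ i, Measurable (Y i) := fun i => (hmeas i).abs
  have hYindep : iIndepFun Y P :=
    hindep.comp (fun _ => (|·| : ℝ → ℝ)) (fun _ => measurable_abs)
  have hYid : ∀ i, IdentDistrib (fun ω => Real.exp (t * Y i ω))
      (fun ω => Real.exp (t * Y 0 ω)) P P := fun i =>
    (hident i).comp ((measurable_abs.const_mul t).exp)
  have hint0 : Integrable (fun ω => Real.exp (t * Y 0 ω)) P :=
    integrable_exp_abs_of_tails P (X 0) (hmeas 0) hc hd0 ht hdt htail
  have hinti : ∀ i, Integrable (fun ω => Real.exp (t * Y i ω)) P := fun i =>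
    (hYid i).integrable_iff.2 hint0
  set M : ℝ := mgf (Y 0) P t with hM_def
  have hMdef : M = ∫ ω, Real.exp (t * Y 0 ω) ∂P := rfl
  have hM1 : 1 ≤ M := by
    rw [hMdef]
    calc (1 : ℝ) = ∫ _ω, (1 : ℝ) ∂P := by simp
      _ ≤ _ := integral_mono (integrable_const 1) hint0 fun ω =>
          Real.one_le_exp (by positivity)
  have hM0 : 0 < M := lt_of_lt_of_le one_pos hM1
  have hMi : ∀ i, mgf (Y i) P t = M := fun i => (hYid i).integral_eq
  set L : ℕ := ⌈2 * Real.log M / t⌉₊ + 1 with hL_def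
  have hL0 : 0 < L := Nat.succ_pos _
  have hML : M ≤ Real.exp (t * L / 2) := by
    have h1 : 2 * Real.log M / t ≤ (L : ℝ) := by
      calc 2 * Real.log M / t ≤ (⌈2 * Real.log M / t⌉₊ : ℝ) := Nat.le_ceil _
        _ ≤ (L : ℝ) := by exact_mod_cast Nat.le_succ _
    have h2 : Real.log M ≤ t * L / 2 := by
      rw [div_le_iff₀ ht] at h1
      nlinarith
    calc M = Real.exp (Real.log M) := (Real.exp_log hM0).symm
      _ ≤ _ := Real.exp_le_exp.2 h2
  set ρX : ℝ := Real.exp (-(t / 2)) with hρX_def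
  have hρX0 : 0 < ρX := Real.exp_pos _
  have hρX1 : ρX < 1 := by
    rw [hρX_def, show (1 : ℝ) = Real.exp 0 by simp]
    exact Real.exp_lt_exp.2 (by linarith)
  set ρT : ℝ := dT ^ ((L : ℝ)⁻¹) with hρT_def
  have hρT0 : 0 < ρT := Real.rpow_pos_of_pos hdT0 _
  have hρT1 : ρT < 1 :=
    Real.rpow_lt_one hdT0.le hdT1 (by positivity)
  have hρTL : ρT ^ L = dT := by
    rw [hρT_def, ← Real.rpow_natCast (dT ^ ((L : ℝ)⁻¹)) L, ← Real.rpow_mul hdT0.le,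
      inv_mul_cancel₀ (by positivity : (L : ℝ) ≠ 0), Real.rpow_one]
  refine ⟨cT + M, by positivity, max ρT ρX, lt_max_of_lt_left hρT0,
    max_lt hρT1 hρX1, fun n => ?_⟩
  set m : ℕ := n / L + 1 with hm_def
  have hnLm : n ≤ L * m := by
    have h := (Nat.div_lt_iff_lt_mul hL0).1 (Nat.lt_succ_self (n / L))
    calc n ≤ m * L := h.le
      _ = L * m := Nat.mul_comm m L
  -- set inclusion
  have hsub : {ω | (n : ℝ) ≤ |∑ k ∈ Finset.range (T ω), X k ω|} ⊆
      {ω | m ≤ T ω} ∪ {ω | (n : ℝ) ≤ (∑ i ∈ Finset.range m, Y i) ω} := by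
    intro ω hω
    by_cases hTm : m ≤ T ω
    · exact Or.inl hTm
    · refine Or.inr ?_
      push_neg at hTm
      have : (n : ℝ) ≤ ∑ i ∈ Finset.range m, Y i ω :=
        calc (n : ℝ) ≤ |∑ k ∈ Finset.range (T ω), X k ω| := hω
          _ ≤ ∑ k ∈ Finset.range (T ω), |X k ω| := Finset.abs_sum_le_sum_abs _ _
          _ ≤ ∑ i ∈ Finset.range m, Y i ω :=
            Finset.sum_le_sum_of_subset_of_nonneg
              (Finset.range_subset_range.2 hTm.le) (fun i _ _ => abs_nonneg _)
      simpa [Finset.sum_apply] using this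
  -- bound the T-term
  have hTbound : P {ω | m ≤ T ω} ≤ ENNReal.ofReal (cT * ρT ^ n) := by
    have hset : {ω | m ≤ T ω} = {ω | (m : ℝ) ≤ |(T ω : ℝ)|} := by
      ext ω
      simp [Nat.abs_cast, Nat.cast_le]
    rw [hset]
    refine (htailT m).trans (ENNReal.ofReal_le_ofReal ?_)
    have : dT ^ m ≤ ρT ^ n := by
      rw [← hρTL, ← pow_mul]
      exact pow_le_pow_of_le_one hρT0.le hρT1.le hnLm
    nlinarith
  -- Chernoff bound for the sum term
  have hint_sum : Integrable (fun ω => Real.exp (t * (∑ i ∈ Finset.range m, Y i) ω)) P :=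
    hYindep.integrable_exp_mul_sum hYmeas (fun i _ => hinti i)
  have hmgf : mgf (∑ i ∈ Finset.range m, Y i) P t = M ^ m := by
    rw [hYindep.mgf_sum hYmeas]
    calc ∏ i ∈ Finset.range m, mgf (Y i) P t = ∏ _i ∈ Finset.range m, M :=
        Finset.prod_congr rfl fun i _ => hMi i
      _ = M ^ m := by simp
  have hch := measure_ge_le_exp_mul_mgf (μ := P) (X := ∑ i ∈ Finset.range m, Y i)
    (n : ℝ) ht.le hint_sum
  rw [hmgf] at hch
  have hXbound : P {ω | (n : ℝ) ≤ (∑ i ∈ Finset.range m, Y i) ω} ≤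
      ENNReal.ofReal (M * ρX ^ n) := by
    have hkey : Real.exp (-t * n) * M ^ m ≤ M * ρX ^ n := by
      have h1 : M ^ (n / L) ≤ Real.exp (t * n / 2) := by
        calc M ^ (n / L) ≤ (Real.exp (t * L / 2)) ^ (n / L) :=
            pow_le_pow_left₀ hM0.le hML _
          _ = Real.exp (((n / L : ℕ) : ℝ) * (t * L / 2)) := (Real.exp_nat_mul _ _).symm
          _ ≤ Real.exp (t * n / 2) := by
              apply Real.exp_le_exp.2
              have h2 : ((n / L : ℕ) : ℝ) * L ≤ (n : ℝ) := by
                exact_mod_cast Nat.div_mul_le_self n L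
              nlinarith [ht.le]
      have hρXn : ρX ^ n = Real.exp ((n : ℝ) * (-(t / 2))) := (Real.exp_nat_mul _ _).symm
      calc Real.exp (-t * n) * M ^ m
          = M * (Real.exp (-t * n) * M ^ (n / L)) := by
            rw [hm_def, pow_succ]; ring
        _ ≤ M * (Real.exp (-t * n) * Real.exp (t * n / 2)) := by
            have := mul_le_mul_of_nonneg_left h1 (Real.exp_pos (-t * n)).le
            nlinarith
        _ = M * ρX ^ n := by
            rw [← Real.exp_add, hρXn]
            congr 2
            ring
    calc P {ω | (n : ℝ) ≤ (∑ i ∈ Finset.range m, Y i) ω}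
        = ENNReal.ofReal ((P {ω | (n : ℝ) ≤ (∑ i ∈ Finset.range m, Y i) ω}).toReal) :=
          (ENNReal.ofReal_toReal (measure_ne_top P _)).symm
      _ ≤ ENNReal.ofReal (Real.exp (-t * n) * M ^ m) := ENNReal.ofReal_le_ofReal hch
      _ ≤ ENNReal.ofReal (M * ρX ^ n) := ENNReal.ofReal_le_ofReal hkey
  calc P {ω | (n : ℝ) ≤ |∑ k ∈ Finset.range (T ω), X k ω|}
      ≤ P ({ω | m ≤ T ω} ∪ {ω | (n : ℝ) ≤ (∑ i ∈ Finset.range m, Y i) ω}) :=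
        measure_mono hsub
    _ ≤ P {ω | m ≤ T ω} + P {ω | (n : ℝ) ≤ (∑ i ∈ Finset.range m, Y i) ω} :=
        measure_union_le _ _
    _ ≤ ENNReal.ofReal (cT * ρT ^ n) + ENNReal.ofReal (M * ρX ^ n) :=
        add_le_add hTbound hXbound
    _ = ENNReal.ofReal (cT * ρT ^ n + M * ρX ^ n) :=
        (ENNReal.ofReal_add (by positivity) (by positivity)).symm
    _ ≤ ENNReal.ofReal ((cT + M) * max ρT ρX ^ n) := by
        apply ENNReal.ofReal_le_ofReal
        have h1 : ρT ^ n ≤ max ρT ρX ^ n := pow_le_pow_left₀ hρT0.le (le_max_left _ _) _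
        have h2 : ρX ^ n ≤ max ρT ρX ^ n := pow_le_pow_left₀ hρX0.le (le_max_right _ _) _
        nlinarith
end

section
/- Let (T,S) be the simulation of q^ℓ from unbiased bits given by the interval-partition construction. Then P(T_{λ} ≥ n) decays exponentially in n whenever λ is an ℕ-valued random variable with exponential tails independent of the bits; specifically, using P(T_k ≥ n) ≤ (b^k + 1)/2^n and choosing d = log 2/(2 log b), one gets P(T_λ ≥ n) ≤ P(λ ≥ dn) + (b^{dn}+1)/2^n, which decays exponentially. -/
open MeasureTheory ProbabilityTheory

private lemma nat_le_four_mul_pow (n : ℕ) : n ≤ 4 * 2 ^ (n / 4) := by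
  have h1 : n < 4 * (n / 4) + 4 := by omega
  have h2 : n / 4 < 2 ^ (n / 4) := Nat.lt_two_pow_self
  calc n ≤ 4 * (n / 4) + 3 := by omega
    _ ≤ 4 * 2 ^ (n / 4) := by omega

private lemma pow_div_le (b n : ℕ) (hb : 2 ≤ b) : b ^ (n / (4 * b)) ≤ 2 ^ (n / 4) := by
  have hbb : b < 2 ^ b := Nat.lt_two_pow_self
  have h1 : b ^ (n / (4 * b)) ≤ (2 ^ b) ^ (n / (4 * b)) :=
    Nat.pow_le_pow_left hbb.le _
  rw [← pow_mul] at h1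
  refine h1.trans (Nat.pow_le_pow_right (by norm_num) ?_)
  have : n / (4 * b) = (n / 4) / b := by rw [Nat.div_div_eq_div_mul]
  rw [this, mul_comm]
  exact Nat.div_mul_le_self _ _

private lemma nat_key (b n : ℕ) (hb : 2 ≤ b) :
    (n / (4 * b)) * (b ^ (n / (4 * b)) + 1) ≤ 8 * 2 ^ (n / 2) := by
  have h1 : n / (4 * b) ≤ n := Nat.div_le_self _ _
  have h2 : b ^ (n / (4 * b)) + 1 ≤ 2 * 2 ^ (n / 4) := by
    have := pow_div_le b n hb
    have : (1 : ℕ) ≤ 2 ^ (n / 4) := Nat.one_le_two_pow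
    omega
  calc (n / (4 * b)) * (b ^ (n / (4 * b)) + 1)
      ≤ (4 * 2 ^ (n / 4)) * (2 * 2 ^ (n / 4)) :=
        Nat.mul_le_mul (h1.trans (nat_le_four_mul_pow n)) h2
    _ = 8 * 2 ^ (n / 4 + n / 4) := by ring
    _ ≤ 8 * 2 ^ (n / 2) := by
        refine Nat.mul_le_mul_left _ (Nat.pow_le_pow_right (by norm_num) (by omega))

private lemma sqrt2_pow_two_mul (k : ℕ) : (Real.sqrt 2) ^ (2 * k) = 2 ^ k := by
  rw [pow_mul, Real.sq_sqrt (by norm_num : (2:ℝ) ≥ 0)]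

private lemma two_pow_half_le (n : ℕ) : (2 : ℝ) ^ (n / 2) ≤ (Real.sqrt 2) ^ n := by
  have h1 : (1 : ℝ) ≤ Real.sqrt 2 := by
    rw [show (1:ℝ) = Real.sqrt 1 by simp]
    exact Real.sqrt_le_sqrt (by norm_num)
  calc (2 : ℝ) ^ (n / 2) = (Real.sqrt 2) ^ (2 * (n / 2)) := (sqrt2_pow_two_mul _).symm
    _ ≤ (Real.sqrt 2) ^ n := pow_le_pow_right₀ h1 (by omega)

/-- Let `T k` be the stopping time of the interval-partition simulation of `q^k` from
unbiased bits, satisfying `P(T k ≥ n) ≤ (b^k + 1)/2^n`, and let `lam` be an `ℕ`-valued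
random variable, independent of the bit sequence (hence of the family `(T k)`), whose
tails decay exponentially.  Then `P(T_lam ≥ n)` decays exponentially in `n`. -/
theorem stmt16 {Ω : Type*} [MeasurableSpace Ω] (P : Measure Ω) [IsProbabilityMeasure P]
    (b : ℕ) (hb : 2 ≤ b) (T : ℕ → Ω → ℕ)
    (hmeas : ∀ k, Measurable (T k))
    (hT : ∀ k n : ℕ, P {ω | n ≤ T k ω} ≤ ((b : ENNReal) ^ k + 1) / 2 ^ n)
    (lam : Ω → ℕ) (hlammeas : Measurable lam)
    (hindep : IndepFun lam (fun ω => fun k => T k ω) P)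
    (hlam : ∃ c : ℝ, 0 < c ∧ ∃ d : ℝ, 0 < d ∧ d < 1 ∧
      ∀ n : ℕ, P {ω | n ≤ lam ω} ≤ ENNReal.ofReal (c * d ^ n)) :
    ∃ c : ℝ, 0 < c ∧ ∃ d : ℝ, 0 < d ∧ d < 1 ∧
      ∀ n : ℕ, P {ω | n ≤ T (lam ω) ω} ≤ ENNReal.ofReal (c * d ^ n) := by
  obtain ⟨c, hc, d, hd0, hd1, hlamtail⟩ := hlam
  set D₁ : ℝ := d ^ ((4 * b : ℝ))⁻¹ with hD₁
  set D : ℝ := max D₁ (Real.sqrt 2)⁻¹ with hD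
  have hbR : (0 : ℝ) < 4 * b := by positivity
  have hD₁0 : 0 < D₁ := Real.rpow_pos_of_pos hd0 _
  have hD₁1 : D₁ < 1 := Real.rpow_lt_one hd0.le hd1 (by positivity)
  have hs2 : (1 : ℝ) < Real.sqrt 2 := by
    rw [show (1:ℝ) = Real.sqrt 1 by simp]
    exact Real.sqrt_lt_sqrt (by norm_num) (by norm_num)
  have hD0 : 0 < D := lt_max_of_lt_left hD₁0
  have hD1 : D < 1 := max_lt hD₁1 (by rw [inv_lt_one_iff₀]; right; exact hs2)
  refine ⟨c / d + 8, by positivity, D, hD0, hD1, fun n => ?_⟩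
  set m : ℕ := n / (4 * b) with hm
  -- set inclusion
  have hsub : {ω | n ≤ T (lam ω) ω} ⊆
      {ω | m ≤ lam ω} ∪ ⋃ k ∈ Finset.range m, {ω | n ≤ T k ω} := by
    intro ω hω
    by_cases h : m ≤ lam ω
    · exact Or.inl h
    · refine Or.inr ?_
      simp only [Set.mem_iUnion, Finset.mem_range]
      exact ⟨lam ω, by omega, hω⟩
  have step1 : P {ω | n ≤ T (lam ω) ω} ≤
      P {ω | m ≤ lam ω} + ∑ k ∈ Finset.range m, P {ω | n ≤ T k ω} :=
    (measure_mono hsub).trans ((measure_union_le _ _).trans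
      (add_le_add le_rfl (measure_biUnion_finset_le _ _)))
  -- bound the sum
  have hsum : ∑ k ∈ Finset.range m, P {ω | n ≤ T k ω} ≤
      (m : ENNReal) * (((b : ENNReal) ^ m + 1) / 2 ^ n) := by
    have : ∀ k ∈ Finset.range m, P {ω | n ≤ T k ω} ≤ ((b : ENNReal) ^ m + 1) / 2 ^ n := by
      intro k hk
      refine (hT k n).trans (ENNReal.div_le_div_right ?_ _)
      have hb1 : (1 : ENNReal) ≤ (b : ENNReal) := by exact_mod_cast Nat.one_le_of_lt hb
      exact add_le_add (pow_le_pow_right₀ hb1 (Finset.mem_range.mp hk).le) le_rfl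
    calc ∑ k ∈ Finset.range m, P {ω | n ≤ T k ω}
        ≤ (Finset.range m).card • (((b : ENNReal) ^ m + 1) / 2 ^ n) :=
          Finset.sum_le_card_nsmul _ _ _ this
      _ = (m : ENNReal) * (((b : ENNReal) ^ m + 1) / 2 ^ n) := by
          rw [Finset.card_range, nsmul_eq_mul]
  -- the sum term is ≤ ofReal (8 * (√2)⁻¹ ^ n)
  have hsum2 : (m : ENNReal) * (((b : ENNReal) ^ m + 1) / 2 ^ n) ≤
      ENNReal.ofReal (8 * (Real.sqrt 2)⁻¹ ^ n) := by
    have hcast : (m : ENNReal) * (((b : ENNReal) ^ m + 1) / 2 ^ n) =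
        ((m * (b ^ m + 1) : ℕ) : ENNReal) / 2 ^ n := by
      rw [← mul_div_assoc]
      congr 1
      push_cast
      ring
    rw [hcast, ENNReal.div_le_iff (by positivity) (by simp)]
    have h1 : ((m * (b ^ m + 1) : ℕ) : ENNReal) ≤ ((8 * 2 ^ (n / 2) : ℕ) : ENNReal) := by
      exact_mod_cast nat_key b n hb
    refine h1.trans ?_
    have h2pow : (2 : ENNReal) ^ n = ENNReal.ofReal ((2 : ℝ) ^ n) := by
      rw [ENNReal.ofReal_pow (by norm_num), ENNReal.ofReal_ofNat]
    rw [h2pow, ← ENNReal.ofReal_mul (by positivity), show ((8 * 2 ^ (n / 2) : ℕ) : ENNReal) =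
      ENNReal.ofReal ((8 * 2 ^ (n / 2) : ℕ) : ℝ) by rw [ENNReal.ofReal_natCast]]
    refine ENNReal.ofReal_le_ofReal ?_
    push_cast
    have hss : Real.sqrt 2 * Real.sqrt 2 = 2 := Real.mul_self_sqrt (by norm_num)
    have hs0 : (0:ℝ) < Real.sqrt 2 := by positivity
    have key : (Real.sqrt 2)⁻¹ ^ n * 2 ^ n = (Real.sqrt 2) ^ n := by
      rw [← mul_pow]
      congr 1
      field_simp
      rw [Real.sq_sqrt (by norm_num)]
    rw [mul_assoc, key]
    have := two_pow_half_le n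
    nlinarith [pow_pos (show (0:ℝ) < Real.sqrt 2 by positivity) n]
  -- the lam term is ≤ ofReal (c/d * D ^ n)
  have hlamterm : P {ω | m ≤ lam ω} ≤ ENNReal.ofReal (c / d * D ^ n) := by
    refine (hlamtail m).trans (ENNReal.ofReal_le_ofReal ?_)
    have hrw : c / d * D ^ n = c * (D ^ n / d) := by ring
    rw [hrw]
    refine mul_le_mul_of_nonneg_left ?_ hc.le
    rw [le_div_iff₀ hd0]
    -- d ^ m * d = d ^ (m+1) ≤ D₁ ^ n ≤ D ^ n
    have h1 : d ^ m * d = d ^ (m + 1) := by ring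
    rw [h1]
    have hexp : (n : ℝ) * ((4 * b : ℝ))⁻¹ ≤ (m + 1 : ℕ) := by
      rw [← div_eq_mul_inv, div_le_iff₀ hbR]
      have hmod : n < (m + 1) * (4 * b) := by
        have h4b : 0 < 4 * b := by omega
        have := Nat.lt_mul_div_succ n h4b
        rw [mul_comm] at this
        exact this
      calc (n : ℝ) ≤ ((m + 1) * (4 * b) : ℕ) := by exact_mod_cast hmod.le
        _ = ((m + 1 : ℕ) : ℝ) * (4 * b) := by push_cast; ring
    have h2 : d ^ (m + 1) ≤ D₁ ^ n := by
      have e1 : d ^ (m + 1) = d ^ ((m + 1 : ℕ) : ℝ) := by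
        rw [Real.rpow_natCast]
      have e2 : D₁ ^ n = d ^ ((n : ℝ) * ((4 * b : ℝ))⁻¹) := by
        rw [hD₁, ← Real.rpow_natCast (d ^ ((4 * b : ℝ))⁻¹) n, ← Real.rpow_mul hd0.le]
        ring_nf
      rw [e1, e2]
      exact Real.rpow_le_rpow_of_exponent_ge hd0 hd1.le hexp
    exact h2.trans (pow_le_pow_left₀ hD₁0.le (le_max_left _ _) n)
  -- combine
  have hfinal : ENNReal.ofReal (c / d * D ^ n) + ENNReal.ofReal (8 * (Real.sqrt 2)⁻¹ ^ n) ≤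
      ENNReal.ofReal ((c / d + 8) * D ^ n) := by
    rw [← ENNReal.ofReal_add (by positivity) (by positivity)]
    refine ENNReal.ofReal_le_ofReal ?_
    have h3 : (Real.sqrt 2)⁻¹ ^ n ≤ D ^ n :=
      pow_le_pow_left₀ (by positivity) (le_max_right _ _) n
    nlinarith [div_nonneg hc.le hd0.le]
  calc P {ω | n ≤ T (lam ω) ω}
      ≤ P {ω | m ≤ lam ω} + ∑ k ∈ Finset.range m, P {ω | n ≤ T k ω} := step1
    _ ≤ ENNReal.ofReal (c / d * D ^ n) + ENNReal.ofReal (8 * (Real.sqrt 2)⁻¹ ^ n) :=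
        add_le_add hlamterm (hsum.trans hsum2)
    _ ≤ ENNReal.ofReal ((c / d + 8) * D ^ n) := hfinal
end

section
/- Let p be a probability vector on A with full support, π the marker pattern of length t, and define marker locations R_k as the successive occurrences of π in an i.i.d. p-sequence indexed by ℤ (with R_1 the first marker at a nonnegative index and R_0 the last marker at a negative index). Then the inter-marker gaps (R_{k+1} - R_k) for k ≠ 0 are identically distributed with exponential tails, and the central gap R_1 - R_0 also has exponential tails. -/
open MeasureTheory ProbabilityTheory

namespace Stmt17PW
variable (M : ℤ → Prop) (Rw : ℤ → ℤ)
variable (hmark : ∀ k, M (Rw k)) (hmono : StrictMono Rw) (h1 : 0 ≤ Rw 1) (h0 : Rw 0 < 0)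
  (hbet : ∀ k i, Rw k < i → i < Rw (k + 1) → ¬ M i)

variable [DecidablePred M]

include hmono

lemma pw_up : ∀ n : ℕ, Rw 0 + n ≤ Rw n := by
  intro n
  induction n with
  | zero => simp
  | succ n ih =>
      have : Rw n < Rw (n + 1) := hmono (by exact_mod_cast Nat.lt_succ_self n)
      push_cast
      omega

lemma pw_down : ∀ n : ℕ, Rw (-(n:ℤ)) ≤ Rw 0 - n := by
  intro n
  induction n with
  | zero => simp
  | succ n ih =>
      have : Rw (-(n:ℤ) - 1) < Rw (-(n:ℤ)) := hmono (by omega)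
      have h2 : (-(↑(n+1):ℤ)) = -(n:ℤ) - 1 := by push_cast; ring
      rw [h2]
      push_cast
      omega

include h0 h1

lemma pw_neg {m : ℤ} (hm : m ≤ 0) : Rw m < 0 :=
  lt_of_le_of_lt (hmono.monotone hm) h0

lemma pw_pos {m : ℤ} (hm : 1 ≤ m) : 0 ≤ Rw m :=
  le_trans h1 (hmono.monotone hm)

include hmark hbet

/-- every marker is some `Rw m` -/
lemma pw_surj {i : ℤ} (hi : M i) : ∃ m, Rw m = i := by
  have hbdd : ∃ b, ∀ z : ℤ, Rw z ≤ i → z ≤ b := by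
    refine ⟨max 0 (i - Rw 0), fun z hz => ?_⟩
    rcases le_or_gt z 0 with h | h
    · exact le_trans h (le_max_left _ _)
    · have := pw_up Rw hmono z.toNat
      have hz0 : (z.toNat : ℤ) = z := Int.toNat_of_nonneg h.le
      rw [hz0] at this
      have : z ≤ i - Rw 0 := by omega
      exact le_trans this (le_max_right _ _)
  have hex : ∃ z : ℤ, Rw z ≤ i := by
    refine ⟨-((Rw 0 - i).toNat), ?_⟩
    have := pw_down Rw hmono (Rw 0 - i).toNat
    have h2 : (Rw 0 - i : ℤ) ≤ ((Rw 0 - i).toNat : ℤ) := Int.self_le_toNat _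
    omega
  obtain ⟨m, hm1, hm2⟩ := Int.exists_greatest_of_bdd hbdd hex
  rcases eq_or_lt_of_le hm1 with h | h
  · exact ⟨m, h⟩
  · exfalso
    have hlt : i < Rw (m + 1) := by
      by_contra hc
      push_neg at hc
      have := hm2 (m+1) hc
      omega
    exact hbet m i h hlt hi

lemma pw_count_pos_of {k i : ℤ} (hk : 1 ≤ k) (hKi : Rw k = i) :
    ((Finset.Ico (0:ℤ) i).filter M).card = (k - 1).toNat := by
  have himg : (Finset.Ico (0:ℤ) i).filter M = (Finset.Ico (1:ℤ) k).image Rw := by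
    ext j
    simp only [Finset.mem_filter, Finset.mem_Ico, Finset.mem_image]
    constructor
    · rintro ⟨⟨hj0, hji⟩, hMj⟩
      obtain ⟨m, hm⟩ := pw_surj M Rw hmark hmono h1 h0 hbet hMj
      refine ⟨m, ⟨?_, ?_⟩, hm⟩
      · by_contra hc
        push_neg at hc
        have := pw_neg Rw hmono h1 h0 (by omega : m ≤ 0)
        omega
      · have : Rw m < Rw k := by omega
        exact hmono.lt_iff_lt.mp this
    · rintro ⟨m, ⟨hm1, hmk⟩, rfl⟩
      refine ⟨⟨pw_pos Rw hmono h1 h0 hm1, ?_⟩, hmark m⟩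
      rw [← hKi]
      exact hmono hmk
  rw [himg, Finset.card_image_of_injective _ hmono.injective, Int.card_Ico]

lemma pw_count_pos {k i : ℤ} (hk : 1 ≤ k) (hi : 0 ≤ i) :
    Rw k = i ↔ (M i ∧ ((Finset.Ico (0:ℤ) i).filter M).card = (k - 1).toNat) := by
  constructor
  · rintro rfl
    exact ⟨hmark k, pw_count_pos_of M Rw hmark hmono h1 h0 hbet hk rfl⟩
  · rintro ⟨hMi, hcard⟩
    obtain ⟨m, rfl⟩ := pw_surj M Rw hmark hmono h1 h0 hbet hMi
    have hm1 : 1 ≤ m := by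
      by_contra hc
      push_neg at hc
      have := pw_neg Rw hmono h1 h0 (by omega : m ≤ 0)
      omega
    have := pw_count_pos_of M Rw hmark hmono h1 h0 hbet hm1 rfl
    have : m = k := by omega
    rw [this]

lemma pw_count_neg_of {k j : ℤ} (hk : k ≤ 0) (hKj : Rw k = j) :
    ((Finset.Ioo j (0:ℤ)).filter M).card = (-k).toNat := by
  have himg : (Finset.Ioo j (0:ℤ)).filter M = (Finset.Ico (k+1) 1).image Rw := by
    ext i
    simp only [Finset.mem_filter, Finset.mem_Ioo, Finset.mem_image, Finset.mem_Ico]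
    constructor
    · rintro ⟨⟨hji, hi0⟩, hMi⟩
      obtain ⟨m, hm⟩ := pw_surj M Rw hmark hmono h1 h0 hbet hMi
      refine ⟨m, ⟨?_, ?_⟩, hm⟩
      · have : Rw k < Rw m := by omega
        have := hmono.lt_iff_lt.mp this
        omega
      · by_contra hc
        push_neg at hc
        have := pw_pos Rw hmono h1 h0 hc
        omega
    · rintro ⟨m, ⟨hm1, hm2⟩, rfl⟩
      refine ⟨⟨?_, pw_neg Rw hmono h1 h0 (by omega : m ≤ 0)⟩, hmark m⟩
      rw [← hKj]
      exact hmono (by omega)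
  rw [himg, Finset.card_image_of_injective _ hmono.injective, Int.card_Ico]
  omega

lemma pw_count_neg {k j : ℤ} (hk : k ≤ 0) (hj : j < 0) :
    Rw k = j ↔ (M j ∧ ((Finset.Ioo j (0:ℤ)).filter M).card = (-k).toNat) := by
  constructor
  · rintro rfl
    exact ⟨hmark k, pw_count_neg_of M Rw hmark hmono h1 h0 hbet hk rfl⟩
  · rintro ⟨hMj, hcard⟩
    obtain ⟨m, rfl⟩ := pw_surj M Rw hmark hmono h1 h0 hbet hMj
    have hm0 : m ≤ 0 := by
      by_contra hc
      push_neg at hc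
      have := pw_pos Rw hmono h1 h0 (by omega : 1 ≤ m)
      omega
    have := pw_count_neg_of M Rw hmark hmono h1 h0 hbet hm0 rfl
    have : m = k := by omega
    rw [this]

lemma pw_next {k i g : ℤ} (hKi : Rw k = i) :
    Rw (k+1) = i + g ↔ (0 < g ∧ M (i + g) ∧ ∀ l, i < l → l < i + g → ¬ M l) := by
  constructor
  · intro h
    have hg : 0 < g := by
      have := hmono (lt_add_one k)
      omega
    refine ⟨hg, h ▸ hmark (k+1), fun l hl1 hl2 => hbet k l (by omega) (by omega)⟩
  · rintro ⟨hg, hM, hno⟩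
    obtain ⟨m, hm⟩ := pw_surj M Rw hmark hmono h1 h0 hbet hM
    have hkm : k < m := by
      have : Rw k < Rw m := by omega
      exact hmono.lt_iff_lt.mp this
    rcases eq_or_lt_of_le (by omega : k + 1 ≤ m) with h | h
    · rw [← h] at hm; omega
    · exfalso
      have hlo : Rw k < Rw (k+1) := hmono (lt_add_one k)
      have hhi : Rw (k+1) < Rw m := hmono h
      exact hno (Rw (k+1)) (by omega) (by omega) (hmark (k+1))

lemma pw_prev {k j g : ℤ} (hKj : Rw (k+1) = j) :
    Rw k = j - g ↔ (0 < g ∧ M (j - g) ∧ ∀ l, j - g < l → l < j → ¬ M l) := by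
  constructor
  · intro h
    have hg : Rw k < Rw (k+1) := hmono (lt_add_one k)
    refine ⟨by omega, h ▸ hmark k, fun l hl1 hl2 => hbet k l (by omega) (by omega)⟩
  · rintro ⟨hg, hM, hno⟩
    obtain ⟨m, hm⟩ := pw_surj M Rw hmark hmono h1 h0 hbet hM
    have hkm : m < k + 1 := by
      have : Rw m < Rw (k+1) := by omega
      exact hmono.lt_iff_lt.mp this
    rcases eq_or_lt_of_le (by omega : m ≤ k) with h | h
    · rw [h] at hm; omega
    · exfalso
      have hlo : Rw m < Rw k := hmono h
      have hhi : Rw k < Rw (k+1) := hmono (lt_add_one k)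
      exact hno (Rw k) (by omega) (by omega) (hmark k)

end Stmt17PW

namespace Stmt17M
open scoped ENNReal

variable {Ω : Type*} [MeasurableSpace Ω]

/-- the window of values `x i, ..., x (i+n-1)` -/
def Tup (x : ℤ → Ω → ℕ) (i : ℤ) (n : ℕ) : Ω → (Fin n → ℕ) := fun ω j => x (i + (j.val : ℤ)) ω

variable (P : Measure Ω) [IsProbabilityMeasure P]
variable (x : ℤ → Ω → ℕ) (p : ℕ → ℝ)
variable (hmeas : ∀ i, Measurable (x i))
  (hindep : iIndepFun x P)
  (hdist : ∀ i s, P {ω | x i ω = s} = ENNReal.ofReal (p s))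

lemma measurableSet_fin {n : ℕ} (C : Set (Fin n → ℕ)) : MeasurableSet C :=
  (Set.to_countable C).measurableSet

include hmeas in
lemma measurable_tup (i : ℤ) (n : ℕ) : Measurable (Tup x i n) :=
  measurable_pi_lambda _ (fun _ => hmeas _)

include hmeas hindep hdist in
lemma cyl (i : ℤ) (n : ℕ) (v : Fin n → ℕ) :
    P (⋂ j : Fin n, {ω | x (i + (j.val : ℤ)) ω = v j})
      = ∏ j : Fin n, ENNReal.ofReal (p (v j)) := by
  have hinj : Function.Injective (fun j : Fin n => i + (j.val : ℤ)) := by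
    intro a b h
    simp only at h
    have : (a.val : ℤ) = (b.val : ℤ) := by omega
    exact Fin.ext (by exact_mod_cast this)
  set e : Fin n ↪ ℤ := ⟨fun j => i + (j.val : ℤ), hinj⟩ with he
  set sets : ℤ → Set ℕ := fun z => {s | ∀ j : Fin n, i + (j.val : ℤ) = z → s = v j} with hsets
  have key := hindep.measure_inter_preimage_eq_mul (Finset.univ.map e)
    (sets := sets) (fun _ _ => (Set.to_countable _).measurableSet)
  have hsets_eq : ∀ j : Fin n, sets (i + (j.val : ℤ)) = {v j} := by
    intro j
    ext s
    simp only [hsets, Set.mem_setOf_eq, Set.mem_singleton_iff]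
    constructor
    · intro h; exact h j rfl
    · intro h j' hj'
      have : j' = j := hinj (by simpa using hj')
      rw [this]; exact h
  have hset_eq : (⋂ z ∈ Finset.univ.map e, x z ⁻¹' sets z)
      = ⋂ j : Fin n, {ω | x (i + (j.val : ℤ)) ω = v j} := by
    ext ω
    simp only [Set.mem_iInter, Finset.mem_map, Finset.mem_univ, Set.mem_preimage,
      Set.mem_setOf_eq, true_and]
    constructor
    · intro h j
      have := h (i + (j.val : ℤ)) ⟨j, by simp [he]⟩
      rw [hsets_eq] at this
      exact this
    · intro h z hz
      obtain ⟨j0, hj0⟩ := hz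
      simp only [he, Function.Embedding.coeFn_mk] at hj0
      intro j' hj'
      rw [← hj', ← hj0] at *
      exact h j'
  rw [hset_eq] at key
  rw [key, Finset.prod_map]
  apply Finset.prod_congr rfl
  intro j _
  have : x (e j) ⁻¹' sets (e j) = {ω | x (i + (j.val : ℤ)) ω = v j} := by
    simp only [he, Function.Embedding.coeFn_mk, hsets_eq]
    rfl
  rw [this, hdist]

include hmeas hindep hdist in
lemma tupLaw (i : ℤ) (n : ℕ) (C : Set (Fin n → ℕ)) :
    P (Tup x i n ⁻¹' C) = ∑' v : C, ∏ j : Fin n, ENNReal.ofReal (p ((v : Fin n → ℕ) j)) := by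
  have hU : Tup x i n ⁻¹' C
      = ⋃ v : C, ⋂ j : Fin n, {ω | x (i + (j.val : ℤ)) ω = (v : Fin n → ℕ) j} := by
    ext ω
    simp only [Set.mem_preimage, Set.mem_iUnion, Set.mem_iInter, Set.mem_setOf_eq]
    constructor
    · intro h
      exact ⟨⟨_, h⟩, fun j => rfl⟩
    · rintro ⟨⟨w, hw⟩, h⟩
      have : Tup x i n ω = w := funext fun j => h j
      rw [this]; exact hw
  rw [hU, measure_iUnion]
  · exact tsum_congr fun v => cyl P x p hmeas hindep hdist i n _
  · intro v v' hvv'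
    simp only [Function.onFun]
    rw [Set.disjoint_left]
    intro ω h1 h2
    simp only [Set.mem_iInter, Set.mem_setOf_eq] at h1 h2
    apply hvv'
    ext1
    funext j
    rw [← h1 j, ← h2 j]
  · intro v
    exact MeasurableSet.iInter fun j => (hmeas _) (MeasurableSet.singleton _)

lemma tup_split (i : ℤ) (m n : ℕ) (C1 : Set (Fin m → ℕ)) (C2 : Set (Fin n → ℕ)) :
    Tup x i m ⁻¹' C1 ∩ Tup x (i + (m:ℤ)) n ⁻¹' C2
      = Tup x i (m + n) ⁻¹'
        {w | (fun j => w (Fin.castAdd n j)) ∈ C1 ∧ (fun j => w (Fin.natAdd m j)) ∈ C2} := by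
  ext ω
  have h1 : (fun j => Tup x i (m+n) ω (Fin.castAdd n j)) = Tup x i m ω := by
    funext j
    simp only [Tup, Fin.coe_castAdd]
  have h2 : (fun j => Tup x i (m+n) ω (Fin.natAdd m j)) = Tup x (i + (m:ℤ)) n ω := by
    funext j
    simp only [Tup, Fin.coe_natAdd]
    congr 1
    push_cast
    ring
  simp only [Set.mem_inter_iff, Set.mem_preimage, Set.mem_setOf_eq, h1, h2]

include hmeas hindep hdist in
lemma split (i : ℤ) (m n : ℕ) (C1 : Set (Fin m → ℕ)) (C2 : Set (Fin n → ℕ)) :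
    P (Tup x i m ⁻¹' C1 ∩ Tup x (i + (m:ℤ)) n ⁻¹' C2)
      = P (Tup x i m ⁻¹' C1) * P (Tup x (i + (m:ℤ)) n ⁻¹' C2) := by
  rw [tup_split, tupLaw P x p hmeas hindep hdist, tupLaw P x p hmeas hindep hdist,
    tupLaw P x p hmeas hindep hdist]
  set C : Set (Fin (m+n) → ℕ) :=
    {w | (fun j => w (Fin.castAdd n j)) ∈ C1 ∧ (fun j => w (Fin.natAdd m j)) ∈ C2} with hC
  set F : (Fin (m+n) → ℕ) → ℝ≥0∞ := fun w => ∏ j : Fin (m+n), ENNReal.ofReal (p (w j)) with hF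
  have hmem : ∀ (v1 : Fin m → ℕ) (v2 : Fin n → ℕ),
      Fin.append v1 v2 ∈ C ↔ v1 ∈ C1 ∧ v2 ∈ C2 := by
    intro v1 v2
    have e1 : (fun j => Fin.append v1 v2 (Fin.castAdd n j)) = v1 :=
      funext fun j => Fin.append_left v1 v2 j
    have e2 : (fun j => Fin.append v1 v2 (Fin.natAdd m j)) = v2 :=
      funext fun j => Fin.append_right v1 v2 j
    simp only [hC, Set.mem_setOf_eq, e1, e2]
  let e : (C1 × C2 : Type _) ≃ C :=
    { toFun := fun q => ⟨Fin.append q.1.1 q.2.1, (hmem _ _).2 ⟨q.1.2, q.2.2⟩⟩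
      invFun := fun w => (⟨fun j => w.1 (Fin.castAdd n j), w.2.1⟩,
        ⟨fun j => w.1 (Fin.natAdd m j), w.2.2⟩)
      left_inv := by
        rintro ⟨⟨v1, h1⟩, ⟨v2, h2⟩⟩
        exact Prod.ext (Subtype.ext (funext fun j => Fin.append_left v1 v2 j))
          (Subtype.ext (funext fun j => Fin.append_right v1 v2 j))
      right_inv := by
        rintro ⟨w, hw⟩
        exact Subtype.ext Fin.append_castAdd_natAdd }
  calc ∑' v : C, F v = ∑' q : (C1 × C2 : Type _), F (e q) :=
        (e.tsum_eq (fun v : C => F (v : Fin (m+n) → ℕ))).symm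
    _ = ∑' q : (C1 × C2 : Type _),
        (∏ j : Fin m, ENNReal.ofReal (p ((q.1 : Fin m → ℕ) j)))
          * ∏ j : Fin n, ENNReal.ofReal (p ((q.2 : Fin n → ℕ) j)) := by
        apply tsum_congr
        rintro ⟨⟨v1, h1⟩, ⟨v2, h2⟩⟩
        have he' : ((e (⟨v1, h1⟩, ⟨v2, h2⟩) : C) : Fin (m+n) → ℕ) = Fin.append v1 v2 := rfl
        simp only [hF, he']
        rw [Fin.prod_univ_add]
        congr 1
        · exact Finset.prod_congr rfl fun j _ => by rw [Fin.append_left]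
        · exact Finset.prod_congr rfl fun j _ => by rw [Fin.append_right]
    _ = (∑' v : C1, ∏ j : Fin m, ENNReal.ofReal (p ((v : Fin m → ℕ) j)))
          * ∑' v : C2, ∏ j : Fin n, ENNReal.ofReal (p ((v : Fin n → ℕ) j)) := by
        rw [ENNReal.tsum_prod']
        simp only [ENNReal.tsum_mul_left, ENNReal.tsum_mul_right]

/-- `m` consecutive length-`t` blocks starting at `b`, all avoiding `D`. -/
def NoBlk (t : ℕ) (D : Set (Fin t → ℕ)) : ℕ → ℤ → Set Ω
  | 0, _ => Set.univ
  | (m+1), b => (Tup x b t ⁻¹' D)ᶜ ∩ NoBlk t D m (b + t)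

lemma mem_noBlk (t : ℕ) (D : Set (Fin t → ℕ)) :
    ∀ (m : ℕ) (b : ℤ) (ω : Ω), ω ∈ NoBlk x t D m b ↔
      ∀ l : ℕ, l < m → Tup x (b + t * l) t ω ∉ D := by
  intro m
  induction m with
  | zero => intro b ω; simp [NoBlk]
  | succ m ih =>
      intro b ω
      simp only [NoBlk, Set.mem_inter_iff, Set.mem_compl_iff, Set.mem_preimage, ih]
      constructor
      · rintro ⟨h0, h1⟩ l hl
        cases l with
        | zero => simpa using h0
        | succ l' =>
            have := h1 l' (by omega)
            push_cast
            rwa [show b + (t:ℤ) * ((l':ℤ)+1) = b + ↑t + ↑t*↑l' from by ring]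
      · intro h
        refine ⟨?_, ?_⟩
        · have := h 0 (Nat.succ_pos m)
          simpa using this
        · intro l hl
          have := h (l+1) (by omega)
          push_cast at this
          rwa [show b + (t:ℤ)*((l:ℤ)+1) = b + ↑t + ↑t*↑l from by ring] at this

include hmeas hindep hdist in
lemma chain (t : ℕ) (D : Set (Fin t → ℕ)) :
    ∀ (m : ℕ) (l : ℤ) (w : ℕ) (C : Set (Fin w → ℕ)),
      P (Tup x l w ⁻¹' C ∩ NoBlk x t D m (l + w))
        = P (Tup x l w ⁻¹' C) * (1 - P (Tup x 0 t ⁻¹' D))^m := by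
  intro m
  induction m with
  | zero => intro l w C; simp [NoBlk]
  | succ m ih =>
      intro l w C
      have hDshift : ∀ i : ℤ, P (Tup x i t ⁻¹' D) = P (Tup x 0 t ⁻¹' D) := by
        intro i
        rw [tupLaw P x p hmeas hindep hdist, tupLaw P x p hmeas hindep hdist]
      have hcast : l + (w:ℤ) + (t:ℤ) = l + ((w + t : ℕ) : ℤ) := by push_cast; ring
      have hstep : Tup x l w ⁻¹' C ∩ NoBlk x t D (m+1) (l + w)
          = Tup x l (w + t) ⁻¹'
              {v | (fun j => v (Fin.castAdd t j)) ∈ C ∧ (fun j => v (Fin.natAdd w j)) ∈ Dᶜ}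
            ∩ NoBlk x t D m (l + ((w + t : ℕ) : ℤ)) := by
        rw [← tup_split x l w t C Dᶜ, Set.preimage_compl, Set.inter_assoc]
        simp only [NoBlk, hcast]
      have hcompl : P (Tup x (l + (w:ℤ)) t ⁻¹' Dᶜ) = 1 - P (Tup x 0 t ⁻¹' D) := by
        rw [Set.preimage_compl,
          measure_compl ((measurableSet_fin D).preimage (measurable_tup x hmeas _ _))
            (measure_ne_top P _), measure_univ, hDshift]
      rw [hstep, ih l (w+t) _, ← tup_split x l w t C Dᶜ,
        split P x p hmeas hindep hdist l w t C Dᶜ, hcompl, pow_succ]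
      ring

end Stmt17M

namespace Stmt17C
open Stmt17M

/-- extend a finite tuple to `ℤ` by zero -/
def extv {n : ℕ} (v : Fin n → ℕ) : ℤ → ℕ := fun z =>
  if h : 0 ≤ z ∧ z < (n:ℤ) then v ⟨z.toNat, by omega⟩ else 0

/-- the marker pattern read off a `ℤ`-indexed sequence -/
def zmark (t : ℕ) (y : ℤ → ℕ) (i : ℤ) : Prop :=
  y i = 2 ∧ ∀ j : ℤ, i < j → j < i + (t:ℤ) → y j = 1

open Classical in
/-- number of `zmark`-positions in `[0, e)` -/
noncomputable def cntIn (t : ℕ) {n : ℕ} (v : Fin n → ℕ) (e : ℤ) : ℕ :=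
  ((Finset.Ico (0:ℤ) e).filter (zmark t (extv v))).card

/-- marker at relative positions 0 and `g`, none strictly between -/
def CD (t g : ℕ) : Set (Fin (g+t) → ℕ) :=
  {v | zmark t (extv v) 0 ∧ zmark t (extv v) (g:ℤ) ∧
    ∀ l : ℤ, 0 < l → l < (g:ℤ) → ¬ zmark t (extv v) l}

/-- exactly `m` markers in the initial stretch `[0, n-t]` -/
def Ccnt (t n m : ℕ) : Set (Fin n → ℕ) := {v | cntIn t v ((n:ℤ) - t + 1) = m}

/-- marker right at relative position 0 -/
def CM (t : ℕ) : Set (Fin t → ℕ) := {v | zmark t (extv v) 0}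

/-- marker at `i`, no marker in `[0,i)` (in window `[0, i+t)`) -/
def CR1 (t i : ℕ) : Set (Fin (i+t) → ℕ) :=
  {v | zmark t (extv v) (i:ℤ) ∧ cntIn t v ((i:ℤ) - t + 1) = 0}

variable {Ω : Type*} (x : ℤ → Ω → ℕ)

lemma extv_tup (i : ℤ) (n : ℕ) (ω : Ω) (z : ℤ) (h0 : 0 ≤ z) (h1 : z < (n:ℤ)) :
    extv (Tup x i n ω) z = x (i + z) ω := by
  simp only [extv, Tup, dif_pos (show 0 ≤ z ∧ z < (n:ℤ) from ⟨h0, h1⟩)]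
  congr 1
  omega

variable (t : ℕ) (Mark : ℤ → Ω → Prop)
  (hMark : ∀ i ω, Mark i ω ↔
      (x i ω = 2 ∧ ∀ j : ℤ, i < j → j < i + (t:ℤ) → x j ω = 1))

include hMark in
lemma zmark_tup (ht : 1 ≤ t) (i : ℤ) (n : ℕ) (ω : Ω) (l : ℤ) (h0 : 0 ≤ l) (h1 : l + t ≤ (n:ℤ)) :
    zmark t (extv (Tup x i n ω)) l ↔ Mark (i + l) ω := by
  rw [hMark]
  unfold zmark
  constructor
  · rintro ⟨hA, hB⟩
    rw [extv_tup x i n ω l h0 (by omega)] at hA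
    refine ⟨hA, fun j hj1 hj2 => ?_⟩
    have := hB (j - i) (by omega) (by omega)
    rw [extv_tup x i n ω (j-i) (by omega) (by omega)] at this
    rwa [show i + (j - i) = j by ring] at this
  · rintro ⟨hA, hB⟩
    constructor
    · rw [extv_tup x i n ω l h0 (by omega)]; exact hA
    · intro j hj1 hj2
      rw [extv_tup x i n ω j (by omega) (by omega)]
      exact hB (i + j) (by omega) (by omega)

include hMark in
lemma cM_tup (ht : 1 ≤ t) (i : ℤ) (ω : Ω) :
    Tup x i t ω ∈ CM t ↔ Mark i ω := by
  have := zmark_tup x t Mark hMark ht i t ω 0 le_rfl (by omega)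
  rw [add_zero] at this
  simpa [CM] using this

include hMark in
lemma cD_tup (ht : 1 ≤ t) (i : ℤ) (g : ℕ) (ω : Ω) :
    Tup x i (g+t) ω ∈ CD t g ↔
      (Mark i ω ∧ Mark (i + (g:ℤ)) ω ∧
        ∀ l : ℤ, i < l → l < i + (g:ℤ) → ¬ Mark l ω) := by
  have h0 := zmark_tup x t Mark hMark ht i (g+t) ω 0 le_rfl (by push_cast; omega)
  have hg := zmark_tup x t Mark hMark ht i (g+t) ω (g:ℤ) (by positivity) (by push_cast; omega)
  rw [add_zero] at h0
  constructor
  · rintro ⟨hA, hB, hC⟩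
    refine ⟨h0.mp hA, hg.mp hB, fun l hl1 hl2 hMl => ?_⟩
    have hzm := zmark_tup x t Mark hMark ht i (g+t) ω (l - i) (by omega) (by push_cast; omega)
    rw [show i + (l - i) = l by ring] at hzm
    exact hC (l - i) (by omega) (by omega) (hzm.mpr hMl)
  · rintro ⟨hA, hB, hC⟩
    refine ⟨h0.mpr hA, hg.mpr hB, fun l hl1 hl2 hzm => ?_⟩
    have hzm' := zmark_tup x t Mark hMark ht i (g+t) ω l (by omega) (by push_cast; omega)
    exact hC (i + l) (by omega) (by omega) (hzm'.mp hzm)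

include hMark in
open Classical in
lemma cnt_tup (ht : 1 ≤ t) (i0 : ℤ) (n : ℕ) (ω : Ω) (e : ℤ) (he : e + t - 1 ≤ (n:ℤ)) :
    cntIn t (Tup x i0 n ω) e
      = ((Finset.Ico i0 (i0 + e)).filter (fun z => Mark z ω)).card := by
  rcases le_or_gt e 0 with h | h
  · unfold cntIn
    have h1 : Finset.Ico (0:ℤ) e = ∅ := Finset.Ico_eq_empty (by omega)
    have h2 : Finset.Ico i0 (i0 + e) = ∅ := Finset.Ico_eq_empty (by omega)
    simp [h1, h2]
  · unfold cntIn
    apply Finset.card_bij' (fun z _ => i0 + z) (fun z _ => z - i0)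
    · intro z hz
      simp only [Finset.mem_filter, Finset.mem_Ico] at hz ⊢
      obtain ⟨⟨hz0, hz1⟩, hzm⟩ := hz
      refine ⟨⟨by omega, by omega⟩, ?_⟩
      exact (zmark_tup x t Mark hMark ht i0 n ω z hz0 (by omega)).mp hzm
    · intro z hz
      simp only [Finset.mem_filter, Finset.mem_Ico] at hz ⊢
      obtain ⟨⟨hz0, hz1⟩, hzm⟩ := hz
      refine ⟨⟨by omega, by omega⟩, ?_⟩
      refine (zmark_tup x t Mark hMark ht i0 n ω (z - i0) (by omega) (by omega)).mpr ?_
      rwa [show i0 + (z - i0) = z by ring]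
    · intro z _; ring
    · intro z _; ring

end Stmt17C
lemma stmt17_arith (r : ℝ) (hr0 : 0 < r) (hr1 : r < 1) (u : ℕ) (hu : 0 < u) :
    ∃ c : ℝ, 0 < c ∧ ∃ d : ℝ, 0 < d ∧ d < 1 ∧
      ∀ n m : ℕ, (n ≤ u * m + 4 * u) → r ^ m ≤ c * d ^ n := by
  refine ⟨(r⁻¹)^4, by positivity, r ^ ((1:ℝ)/u), Real.rpow_pos_of_pos hr0 _, ?_, ?_⟩
  · exact Real.rpow_lt_one hr0.le hr1 (by positivity)
  · intro n m hnm
    have hd : (r ^ ((1:ℝ)/u)) ^ n = r ^ ((n:ℝ)/u) := by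
      rw [← Real.rpow_natCast (r ^ ((1:ℝ)/u)) n, ← Real.rpow_mul hr0.le]
      congr 1
      field_simp
    rw [hd]
    have h1 : (n:ℝ)/u ≤ (m:ℝ) + 4 := by
      rw [div_le_iff₀ (by positivity)]
      calc (n:ℝ) ≤ (u:ℝ) * m + 4*u := by exact_mod_cast hnm
        _ = ((m:ℝ)+4)*u := by ring
    have h2 : r ^ (((m:ℝ))+4) ≤ r ^ ((n:ℝ)/u) := Real.rpow_le_rpow_of_exponent_ge hr0 hr1.le h1
    have h3 : r ^ (((m:ℝ))+4) = r ^ (m+4 : ℕ) := by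
      rw [← Real.rpow_natCast r (m+4)]
      congr 1
      push_cast
      ring
    have h4 : (r⁻¹)^4 * r^(m+4:ℕ) = r ^ m := by
      rw [pow_add]
      have : r ≠ 0 := ne_of_gt hr0
      field_simp
    calc r ^ m = (r⁻¹)^4 * r^(m+4:ℕ) := h4.symm
      _ ≤ (r⁻¹)^4 * r ^ ((n:ℝ)/u) := by
          rw [← h3]
          exact mul_le_mul_of_nonneg_left h2 (by positivity)
open MeasureTheory ProbabilityTheory
open scoped ENNReal

/-- Let `p` be a probability vector on `{1,...,a}` with full support and let
`(x i)_{i ∈ ℤ}` be i.i.d. with distribution `p`.  A marker is an index `i` with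
`x i = 2` and `x (i+1) = ... = x (i+t-1) = 1`.  Let `(R k)_{k ∈ ℤ}` enumerate the
markers increasingly, with `R 1` the first marker at a nonnegative index and `R 0`
the last marker at a negative index.  Then the inter-marker gaps `R (k+1) - R k` for
`k ≠ 0` are identically distributed with exponential tails, and the central gap
`R 1 - R 0` also has exponential tails. -/
theorem stmt17 {Ω : Type*} [MeasurableSpace Ω] (P : Measure Ω) [IsProbabilityMeasure P]
    (a : ℕ) (ha : 2 ≤ a) (t : ℕ) (ht : 1 ≤ t)
    (p : ℕ → ℝ) (hp : ∀ s ∈ Finset.Icc 1 a, 0 < p s)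
    (hp1 : ∑ s ∈ Finset.Icc 1 a, p s = 1)
    (x : ℤ → Ω → ℕ) (hmeas : ∀ i, Measurable (x i))
    (hindep : iIndepFun x P)
    (hdist : ∀ i s, P {ω | x i ω = s} = ENNReal.ofReal (p s))
    (Mark : ℤ → Ω → Prop)
    (hMark : ∀ i ω, Mark i ω ↔
      (x i ω = 2 ∧ ∀ j : ℤ, i < j → j < i + t → x j ω = 1))
    (R : ℤ → Ω → ℤ) (hRmeas : ∀ k, Measurable (R k))
    (hR : ∀ᵐ ω ∂P,
      (∀ k, Mark (R k ω) ω) ∧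
      StrictMono (fun k => R k ω) ∧
      0 ≤ R 1 ω ∧ R 0 ω < 0 ∧
      (∀ k i, R k ω < i → i < R (k + 1) ω → ¬ Mark i ω)) :
    (∀ k k' : ℤ, k ≠ 0 → k' ≠ 0 →
      IdentDistrib (fun ω => R (k + 1) ω - R k ω)
        (fun ω => R (k' + 1) ω - R k' ω) P P) ∧
    (∃ c : ℝ, 0 < c ∧ ∃ d : ℝ, 0 < d ∧ d < 1 ∧
      ∀ k : ℤ, k ≠ 0 → ∀ n : ℕ,
        P {ω | (n : ℤ) ≤ R (k + 1) ω - R k ω} ≤ ENNReal.ofReal (c * d ^ n)) ∧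
    (∃ c : ℝ, 0 < c ∧ ∃ d : ℝ, 0 < d ∧ d < 1 ∧
      ∀ n : ℕ, P {ω | (n : ℤ) ≤ R 1 ω - R 0 ω} ≤ ENNReal.ofReal (c * d ^ n)) := by
  classical
  -- the good event
  set G : Set Ω := {ω | (∀ k, Mark (R k ω) ω) ∧ StrictMono (fun k => R k ω) ∧
      0 ≤ R 1 ω ∧ R 0 ω < 0 ∧
      (∀ k i, R k ω < i → i < R (k + 1) ω → ¬ Mark i ω)} with hGdef
  have hGc : P Gᶜ = 0 := by
    have h' := hR
    rw [MeasureTheory.ae_iff] at h'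
    have hGG : Gᶜ = {ω | ¬ ((∀ k, Mark (R k ω) ω) ∧ StrictMono (fun k => R k ω) ∧
      0 ≤ R 1 ω ∧ R 0 ω < 0 ∧
      (∀ k i, R k ω < i → i < R (k + 1) ω → ¬ Mark i ω))} := by
      rw [hGdef]
      rfl
    rw [hGG]
    exact h'
  have hPle : ∀ A B : Set Ω, (∀ ω ∈ G, ω ∈ A → ω ∈ B) → P A ≤ P B := by
    intro A B h
    calc P A ≤ P (B ∪ Gᶜ) := measure_mono (fun ω hω => by
          by_cases hg : ω ∈ G
          · exact Or.inl (h ω hg hω)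
          · exact Or.inr hg)
      _ ≤ P B + P Gᶜ := measure_union_le _ _
      _ = P B := by rw [hGc, add_zero]
  have hPeq : ∀ A B : Set Ω, (∀ ω ∈ G, (ω ∈ A ↔ ω ∈ B)) → P A = P B :=
    fun A B h => le_antisymm (hPle A B fun ω hg => (h ω hg).mp)
      (hPle B A fun ω hg => (h ω hg).mpr)
  have hP0 : ∀ A : Set Ω, (∀ ω ∈ G, ω ∉ A) → P A = 0 := by
    intro A h
    have h2 := hPle A ∅ (fun ω hg hA => absurd hA (h ω hg))
    simpa using h2
  -- markers are at distance ≥ t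
  have hapart : ∀ (ω : Ω) (pz iz : ℤ), Mark pz ω → Mark iz ω → pz < iz → iz < pz + t → False := by
    intro ω pz iz hp' hi hlt hlt2
    have h2 : x iz ω = 1 := (((hMark pz ω).mp hp').2) iz hlt hlt2
    have h3 : x iz ω = 2 := ((hMark iz ω).mp hi).1
    omega
  have hfilter_pos : ∀ (ω : Ω) (i : ℤ), Mark i ω →
      (Finset.Ico (0:ℤ) (i - t + 1)).filter (fun z => Mark z ω)
        = (Finset.Ico (0:ℤ) i).filter (fun z => Mark z ω) := by
    intro ω i hMi
    ext z
    simp only [Finset.mem_filter, Finset.mem_Ico]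
    constructor
    · rintro ⟨⟨hz1, hz2⟩, hz3⟩
      exact ⟨⟨hz1, by omega⟩, hz3⟩
    · rintro ⟨⟨hz1, hz2⟩, hz3⟩
      refine ⟨⟨hz1, ?_⟩, hz3⟩
      by_contra hc
      exact hapart ω z i hz3 hMi (by omega) (by omega)
  have hfilter_neg : ∀ (ω : Ω) (j : ℤ), Mark j ω →
      (Finset.Ico (j + (t:ℤ)) (0:ℤ)).filter (fun z => Mark z ω)
        = (Finset.Ioo j (0:ℤ)).filter (fun z => Mark z ω) := by
    intro ω j hMj
    ext z
    simp only [Finset.mem_filter, Finset.mem_Ico, Finset.mem_Ioo]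
    constructor
    · rintro ⟨⟨hz1, hz2⟩, hz3⟩
      exact ⟨⟨by omega, hz2⟩, hz3⟩
    · rintro ⟨⟨hz1, hz2⟩, hz3⟩
      refine ⟨⟨?_, hz2⟩, hz3⟩
      by_contra hc
      exact hapart ω j z hMj hz3 (by omega) (by omega)
  have hgapMeas : ∀ k : ℤ, Measurable (fun ω => R (k+1) ω - R k ω) := by
    intro k
    have h1 : Measurable fun ω => (R (k+1) ω, R k ω) := (hRmeas (k+1)).prodMk (hRmeas k)
    exact (measurable_of_countable (fun q : ℤ × ℤ => q.1 - q.2)).comp h1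
  -- decomposition according to the value of an integer random variable
  have hsum : ∀ (f : Ω → ℤ), Measurable f → ∀ (S : Set Ω), MeasurableSet S →
      P S = ∑' i : ℤ, P ({ω | f ω = i} ∩ S) := by
    intro f hf S hS
    have hU : S = ⋃ i : ℤ, ({ω | f ω = i} ∩ S) := by
      ext ω
      simp only [Set.mem_iUnion, Set.mem_inter_iff, Set.mem_setOf_eq]
      exact ⟨fun h => ⟨f ω, rfl, h⟩, fun ⟨i, _, h⟩ => h⟩
    conv_lhs => rw [hU]
    rw [measure_iUnion]
    · intro i i' hne
      simp only [Function.onFun]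
      apply Set.disjoint_left.mpr
      rintro ω ⟨h1, _⟩ ⟨h2, _⟩
      apply hne
      simp only [Set.mem_setOf_eq] at h1 h2
      omega
    · intro i
      exact (hf (measurableSet_singleton i)).inter hS
  -- β and B
  set β : ℕ → ℝ≥0∞ := fun g => P (Stmt17M.Tup x 0 (g+t) ⁻¹' Stmt17C.CD t g) with hβdef
  set βz : ℤ → ℝ≥0∞ := fun gz => if 1 ≤ gz then β gz.toNat else 0 with hβzdef
  set B : ℝ≥0∞ := ∑' gz : ℤ, βz gz with hBdef
  have hβshift : ∀ (i : ℤ) (g : ℕ), P (Stmt17M.Tup x i (g+t) ⁻¹' Stmt17C.CD t g) = β g := by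
    intro i g
    simp only [hβdef]
    rw [Stmt17M.tupLaw P x p hmeas hindep hdist i, Stmt17M.tupLaw P x p hmeas hindep hdist 0]
  -- positive-index gaps
  have keyPos : ∀ k : ℤ, 1 ≤ k → ∃ S : ℝ≥0∞, ∀ gz : ℤ,
      P {ω | R (k+1) ω - R k ω = gz} = S * βz gz := by
    intro k hk
    refine ⟨∑' i : ℤ, (if 0 ≤ i then
      P (Stmt17M.Tup x 0 i.toNat ⁻¹' Stmt17C.Ccnt t i.toNat (k-1).toNat) else 0), ?_⟩
    intro gz
    rcases le_or_gt gz 0 with hgz | hgz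
    · have h0' : P {ω | R (k+1) ω - R k ω = gz} = 0 := by
        apply hP0
        intro ω hgood hmem
        obtain ⟨hmk, hsm, h1', h0', hbt⟩ := hgood
        have hh := hsm (lt_add_one k)
        simp only [Set.mem_setOf_eq] at hmem
        simp only at hh
        omega
      rw [h0', hβzdef]
      simp only [if_neg (by omega : ¬ (1:ℤ) ≤ gz), mul_zero]
    · set g : ℕ := gz.toNat with hgdef
      have hgz' : gz = (g:ℤ) := by omega
      have hg1 : 1 ≤ g := by omega
      rw [hsum (R k) (hRmeas k) {ω | R (k+1) ω - R k ω = gz}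
        (by exact (hgapMeas k) (measurableSet_singleton gz))]
      have hterm : ∀ i : ℤ, P ({ω | R k ω = i} ∩ {ω | R (k+1) ω - R k ω = gz})
          = (if 0 ≤ i then
              P (Stmt17M.Tup x 0 i.toNat ⁻¹' Stmt17C.Ccnt t i.toNat (k-1).toNat) else 0)
            * βz gz := by
        intro i
        rcases lt_or_ge i 0 with hi | hi
        · rw [if_neg (by omega), zero_mul]
          apply hP0
          rintro ω hgood ⟨h1, _⟩
          obtain ⟨hmk, hsm, h1', h0', hbt⟩ := hgood
          have h2 : R 1 ω ≤ R k ω := hsm.monotone hk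
          simp only [Set.mem_setOf_eq] at h1
          omega
        · rw [if_pos hi]
          have hiz : ((i.toNat : ℕ) : ℤ) = i := Int.toNat_of_nonneg hi
          have hev : P ({ω | R k ω = i} ∩ {ω | R (k+1) ω - R k ω = gz})
              = P (Stmt17M.Tup x 0 i.toNat ⁻¹' Stmt17C.Ccnt t i.toNat (k-1).toNat
                  ∩ Stmt17M.Tup x i (g+t) ⁻¹' Stmt17C.CD t g) := by
            apply hPeq
            intro ω hgood
            obtain ⟨hmk, hsm, h1', h0', hbt⟩ := hgood
            have hcd := Stmt17C.cD_tup x t Mark hMark ht i g ω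
            have hcnt : (Stmt17M.Tup x 0 i.toNat ω ∈ Stmt17C.Ccnt t i.toNat (k-1).toNat) ↔
                (((Finset.Ico (0:ℤ) (i - t + 1)).filter (fun z => Mark z ω)).card
                  = (k-1).toNat) := by
              show (Stmt17C.cntIn t (Stmt17M.Tup x 0 i.toNat ω)
                ((i.toNat:ℤ) - t + 1) = (k-1).toNat) ↔ _
              rw [Stmt17C.cnt_tup x t Mark hMark ht 0 i.toNat ω _ (by omega)]
              rw [zero_add, hiz]
            simp only [Set.mem_inter_iff, Set.mem_setOf_eq, Set.mem_preimage]
            rw [hcnt, hcd]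
            constructor
            · rintro ⟨hRk, hgap⟩
              have hRk1 : R (k+1) ω = i + (g:ℤ) := by omega
              have hMi : Mark i ω := by rw [← hRk]; exact hmk k
              have hMig : Mark (i + (g:ℤ)) ω := by rw [← hRk1]; exact hmk (k+1)
              refine ⟨?_, hMi, hMig, fun l hl1 hl2 => hbt k l (by omega) (by omega)⟩
              rw [hfilter_pos ω i hMi]
              exact Stmt17PW.pw_count_pos_of (fun z => Mark z ω) (fun k => R k ω)
                hmk hsm h1' h0' hbt hk hRk
            · rintro ⟨hcard, hMi, hMig, hno⟩
              have hRk : R k ω = i := by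
                refine (Stmt17PW.pw_count_pos (fun z => Mark z ω) (fun k => R k ω)
                  hmk hsm h1' h0' hbt hk hi).mpr ⟨hMi, ?_⟩
                rw [← hfilter_pos ω i hMi]
                exact hcard
              have hRk1 : R (k+1) ω = i + (g:ℤ) := by
                exact (Stmt17PW.pw_next (fun z => Mark z ω) (fun k => R k ω)
                  hmk hsm h1' h0' hbt hRk).mpr ⟨by omega, hMig, hno⟩
              exact ⟨hRk, by omega⟩
          rw [hev]
          have hsp := Stmt17M.split P x p hmeas hindep hdist 0 i.toNat (g+t)
            (Stmt17C.Ccnt t i.toNat (k-1).toNat) (Stmt17C.CD t g)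
          rw [zero_add, hiz] at hsp
          rw [hsp, hβshift i g]
          congr 1
          rw [hβzdef]
          simp only [if_pos (by omega : (1:ℤ) ≤ gz)]
          rfl
      rw [tsum_congr hterm, ENNReal.tsum_mul_right]
  -- negative-index gaps
  have keyNeg : ∀ k : ℤ, k ≤ -1 → ∃ S : ℝ≥0∞, ∀ gz : ℤ,
      P {ω | R (k+1) ω - R k ω = gz} = S * βz gz := by
    intro k hk
    refine ⟨∑' j : ℤ, (if j ≤ -1 then
      P (Stmt17M.Tup x (j+(t:ℤ)) (-j-1).toNat ⁻¹'
        Stmt17C.Ccnt t (-j-1).toNat (-(k+1)).toNat) else 0), ?_⟩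
    intro gz
    rcases le_or_gt gz 0 with hgz | hgz
    · have h0' : P {ω | R (k+1) ω - R k ω = gz} = 0 := by
        apply hP0
        intro ω hgood hmem
        obtain ⟨hmk, hsm, h1', h0', hbt⟩ := hgood
        have hh := hsm (lt_add_one k)
        simp only [Set.mem_setOf_eq] at hmem
        simp only at hh
        omega
      rw [h0', hβzdef]
      simp only [if_neg (by omega : ¬ (1:ℤ) ≤ gz), mul_zero]
    · set g : ℕ := gz.toNat with hgdef
      have hgz' : gz = (g:ℤ) := by omega
      have hg1 : 1 ≤ g := by omega
      rw [hsum (R (k+1)) (hRmeas (k+1)) {ω | R (k+1) ω - R k ω = gz}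
        (by exact (hgapMeas k) (measurableSet_singleton gz))]
      have hterm : ∀ j : ℤ, P ({ω | R (k+1) ω = j} ∩ {ω | R (k+1) ω - R k ω = gz})
          = (if j ≤ -1 then
              P (Stmt17M.Tup x (j+(t:ℤ)) (-j-1).toNat ⁻¹'
                Stmt17C.Ccnt t (-j-1).toNat (-(k+1)).toNat) else 0) * βz gz := by
        intro j
        rcases le_or_gt 0 j with hj | hj
        · rw [if_neg (by omega), zero_mul]
          apply hP0
          rintro ω hgood ⟨h1, _⟩
          obtain ⟨hmk, hsm, h1', h0', hbt⟩ := hgood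
          have h2 : R (k+1) ω ≤ R 0 ω := hsm.monotone (by omega)
          simp only [Set.mem_setOf_eq] at h1
          omega
        · rw [if_pos (by omega)]
          set len : ℕ := (-j-1).toNat with hlendef
          have hlenz : ((len : ℕ) : ℤ) = -j-1 := by omega
          have hev : P ({ω | R (k+1) ω = j} ∩ {ω | R (k+1) ω - R k ω = gz})
              = P (Stmt17M.Tup x (j - (g:ℤ)) (g+t) ⁻¹' Stmt17C.CD t g
                  ∩ Stmt17M.Tup x (j+(t:ℤ)) len ⁻¹' Stmt17C.Ccnt t len (-(k+1)).toNat) := by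
            apply hPeq
            intro ω hgood
            obtain ⟨hmk, hsm, h1', h0', hbt⟩ := hgood
            have hcd := Stmt17C.cD_tup x t Mark hMark ht (j - (g:ℤ)) g ω
            rw [show j - (g:ℤ) + (g:ℤ) = j from by ring] at hcd
            have hcnt : (Stmt17M.Tup x (j+(t:ℤ)) len ω ∈ Stmt17C.Ccnt t len (-(k+1)).toNat) ↔
                (((Finset.Ico (j+(t:ℤ)) (0:ℤ)).filter (fun z => Mark z ω)).card
                  = (-(k+1)).toNat) := by
              show (Stmt17C.cntIn t (Stmt17M.Tup x (j+(t:ℤ)) len ω)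
                ((len:ℤ) - t + 1) = (-(k+1)).toNat) ↔ _
              rw [Stmt17C.cnt_tup x t Mark hMark ht (j+(t:ℤ)) len ω _ (by omega),
                show j + (t:ℤ) + ((len:ℤ) - t + 1) = 0 from by omega]
            simp only [Set.mem_inter_iff, Set.mem_setOf_eq, Set.mem_preimage]
            rw [hcnt, hcd]
            constructor
            · rintro ⟨hRk1, hgap⟩
              have hRk : R k ω = j - (g:ℤ) := by omega
              have hMj : Mark j ω := by rw [← hRk1]; exact hmk (k+1)
              have hMjg : Mark (j - (g:ℤ)) ω := by rw [← hRk]; exact hmk k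
              refine ⟨⟨hMjg, hMj, fun l hl1 hl2 => hbt k l (by omega) (by omega)⟩, ?_⟩
              rw [hfilter_neg ω j hMj]
              exact Stmt17PW.pw_count_neg_of (fun z => Mark z ω) (fun k => R k ω)
                hmk hsm h1' h0' hbt (by omega : k + 1 ≤ 0) hRk1
            · rintro ⟨⟨hMjg, hMj, hno⟩, hcard⟩
              have hRk1 : R (k+1) ω = j := by
                refine (Stmt17PW.pw_count_neg (fun z => Mark z ω) (fun k => R k ω)
                  hmk hsm h1' h0' hbt (by omega : k + 1 ≤ 0) hj).mpr ⟨hMj, ?_⟩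
                rw [← hfilter_neg ω j hMj]
                exact hcard
              have hRk : R k ω = j - (g:ℤ) :=
                (Stmt17PW.pw_prev (fun z => Mark z ω) (fun k => R k ω)
                  hmk hsm h1' h0' hbt hRk1).mpr ⟨by omega, hMjg, hno⟩
              exact ⟨hRk1, by omega⟩
          rw [hev]
          have hsp := Stmt17M.split P x p hmeas hindep hdist (j - (g:ℤ)) (g+t) len
            (Stmt17C.CD t g) (Stmt17C.Ccnt t len (-(k+1)).toNat)
          rw [show j - (g:ℤ) + ((g+t : ℕ) : ℤ) = j + (t:ℤ) from by push_cast; ring] at hsp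
          rw [hsp, hβshift (j - (g:ℤ)) g, mul_comm]
          congr 1
          rw [hβzdef]
          simp only [if_pos (by omega : (1:ℤ) ≤ gz)]
          rfl
      rw [tsum_congr hterm, ENNReal.tsum_mul_right]
  -- the master identity
  have key : ∀ k : ℤ, k ≠ 0 → ∀ gz : ℤ,
      P {ω | R (k+1) ω - R k ω = gz} = B⁻¹ * βz gz := by
    intro k hk
    obtain ⟨S, hS⟩ : ∃ S : ℝ≥0∞, ∀ gz : ℤ,
        P {ω | R (k+1) ω - R k ω = gz} = S * βz gz := by
      rcases lt_or_ge 0 k with h | h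
      · exact keyPos k (by omega)
      · exact keyNeg k (by omega)
    have hSB : S * B = 1 := by
      have huniv : (Set.univ : Set Ω) = ⋃ gz : ℤ, {ω | R (k+1) ω - R k ω = gz} := by
        ext ω
        simp only [Set.mem_univ, Set.mem_iUnion, Set.mem_setOf_eq, true_iff]
        exact ⟨R (k+1) ω - R k ω, rfl⟩
      have h1 : (1:ℝ≥0∞) = ∑' gz : ℤ, P {ω | R (k+1) ω - R k ω = gz} := by
        rw [← measure_univ (μ := P)]
        conv_lhs => rw [huniv]
        rw [measure_iUnion]
        · intro g1 g2 hne
          simp only [Function.onFun]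
          apply Set.disjoint_left.mpr
          rintro ω h1 h2
          simp only [Set.mem_setOf_eq] at h1 h2
          exact hne (by omega)
        · exact fun gz => (hgapMeas k) (measurableSet_singleton gz)
      rw [hBdef, ← ENNReal.tsum_mul_left, h1]
      exact tsum_congr fun gz => (hS gz).symm
    have hB0 : B ≠ 0 := by
      intro h
      rw [h, mul_zero] at hSB
      exact one_ne_zero hSB.symm
    have hBtop : B ≠ ⊤ := by
      intro h
      rw [h] at hSB
      rcases eq_or_ne S 0 with h' | h'
      · rw [h', zero_mul] at hSB
        exact one_ne_zero hSB.symm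
      · rw [ENNReal.mul_top h'] at hSB
        exact ENNReal.top_ne_one hSB
    have hSeq : S = B⁻¹ := by
      calc S = S * (B * B⁻¹) := by rw [ENNReal.mul_inv_cancel hB0 hBtop, mul_one]
        _ = (S * B) * B⁻¹ := by ring
        _ = B⁻¹ := by rw [hSB, one_mul]
    intro gz
    rw [hS gz, hSeq]
  -- identical distribution
  have hID : ∀ k k' : ℤ, k ≠ 0 → k' ≠ 0 →
      IdentDistrib (fun ω => R (k + 1) ω - R k ω) (fun ω => R (k' + 1) ω - R k' ω) P P := by
    intro k k' hk hk'
    refine ⟨(hgapMeas k).aemeasurable, (hgapMeas k').aemeasurable, ?_⟩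
    apply MeasureTheory.Measure.ext_of_singleton
    intro gz
    rw [Measure.map_apply (hgapMeas k) (measurableSet_singleton gz),
      Measure.map_apply (hgapMeas k') (measurableSet_singleton gz)]
    have e1 : (fun ω => R (k+1) ω - R k ω) ⁻¹' {gz} = {ω | R (k+1) ω - R k ω = gz} := rfl
    have e2 : (fun ω => R (k'+1) ω - R k' ω) ⁻¹' {gz} = {ω | R (k'+1) ω - R k' ω = gz} := rfl
    rw [e1, e2, key k hk gz, key k' hk' gz]
  -- the block probability
  set Q2 : ℝ≥0∞ := P (Stmt17M.Tup x 0 t ⁻¹' Stmt17C.CM t) with hQ2def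
  have hp1pos : 0 < p 1 := hp 1 (Finset.mem_Icc.mpr ⟨le_refl 1, by omega⟩)
  have hp2pos : 0 < p 2 := hp 2 (Finset.mem_Icc.mpr ⟨by omega, ha⟩)
  have hQ2le : Q2 ≤ ENNReal.ofReal (p 2) := by
    rw [hQ2def, ← hdist 0 2]
    apply measure_mono
    intro ω hω
    have h1 : Mark 0 ω := (Stmt17C.cM_tup x t Mark hMark ht 0 ω).mp hω
    exact ((hMark 0 ω).mp h1).1
  have hsum12 : ENNReal.ofReal (p 1) + ENNReal.ofReal (p 2) ≤ 1 := by
    have hd : Disjoint {ω | x 0 ω = 1} {ω | x 0 ω = 2} := by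
      apply Set.disjoint_left.mpr
      intro ω h1 h2
      simp only [Set.mem_setOf_eq] at h1 h2
      omega
    have hm : MeasurableSet {ω | x 0 ω = 2} := (hmeas 0) (measurableSet_singleton 2)
    rw [← hdist 0 1, ← hdist 0 2, ← measure_union hd hm]
    exact prob_le_one
  have hQ2lt1 : Q2 < 1 := by
    refine lt_of_le_of_lt hQ2le ?_
    have h1 : ENNReal.ofReal (p 2) < ENNReal.ofReal (p 1) + ENNReal.ofReal (p 2) := by
      rw [add_comm]
      exact ENNReal.lt_add_right ENNReal.ofReal_ne_top
        (ENNReal.ofReal_pos.mpr hp1pos).ne'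
    exact lt_of_lt_of_le h1 hsum12
  have hQ2pos : 0 < Q2 := by
    set vM : Fin t → ℕ := fun j => if (j : ℕ) = 0 then 2 else 1 with hvM
    have hvMvals : ∀ z : ℤ, 0 ≤ z → z < (t:ℤ) → Stmt17C.extv vM z = if z = 0 then 2 else 1 := by
      intro z h0 h1
      rw [Stmt17C.extv, dif_pos ⟨h0, h1⟩, hvM]
      by_cases hz : z = 0
      · subst hz; simp
      · simp only [if_neg hz]
        rw [if_neg (by omega : ¬ (z.toNat = 0))]
    have hsub : ({vM} : Set (Fin t → ℕ)) ⊆ Stmt17C.CM t := by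
      intro v hv
      rw [Set.mem_singleton_iff] at hv
      subst hv
      show Stmt17C.zmark t (Stmt17C.extv vM) 0
      constructor
      · rw [hvMvals 0 le_rfl (by exact_mod_cast ht)]
        simp
      · intro j hj1 hj2
        rw [hvMvals j (by omega) (by omega)]
        rw [if_neg (by omega)]
    have hU : Stmt17M.Tup x 0 t ⁻¹' ({vM} : Set (Fin t → ℕ))
        = ⋂ j : Fin t, {ω | x (0 + (j.val:ℤ)) ω = vM j} := by
      ext ω
      simp only [Set.mem_preimage, Set.mem_singleton_iff, Set.mem_iInter, Set.mem_setOf_eq]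
      constructor
      · intro h j
        rw [← h]
        rfl
      · intro h
        funext j
        exact h j
    have hval : P (Stmt17M.Tup x 0 t ⁻¹' ({vM} : Set (Fin t → ℕ)))
        = ∏ j : Fin t, ENNReal.ofReal (p (vM j)) := by
      rw [hU]
      exact Stmt17M.cyl P x p hmeas hindep hdist 0 t vM
    have hprodpos : 0 < ∏ j : Fin t, ENNReal.ofReal (p (vM j)) := by
      rw [CanonicallyOrderedAdd.prod_pos]
      intro j _
      rw [hvM]
      by_cases hj : (j:ℕ) = 0
      · simp only [hj, if_pos rfl]
        exact ENNReal.ofReal_pos.mpr hp2pos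
      · simp only [if_neg hj]
        exact ENNReal.ofReal_pos.mpr hp1pos
    calc (0:ℝ≥0∞) < ∏ j : Fin t, ENNReal.ofReal (p (vM j)) := hprodpos
      _ = P (Stmt17M.Tup x 0 t ⁻¹' ({vM} : Set (Fin t → ℕ))) := hval.symm
      _ ≤ Q2 := by
          rw [hQ2def]
          exact measure_mono (Set.preimage_mono hsub)
  -- gap tail at k = 1
  have tail1 : ∀ n : ℕ, P {ω | (n:ℤ) ≤ R (1+1) ω - R 1 ω} ≤ (1 - Q2)^(n/t - 1) := by
    intro n
    set m : ℕ := n / t - 1 with hmdef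
    have hSmeas : MeasurableSet {ω | (n:ℤ) ≤ R (1+1) ω - R 1 ω} :=
      (hgapMeas 1) ((Set.to_countable (Set.Ici (n:ℤ))).measurableSet)
    rw [hsum (R 1) (hRmeas 1) _ hSmeas]
    have hterm : ∀ i : ℤ, P ({ω | R 1 ω = i} ∩ {ω | (n:ℤ) ≤ R (1+1) ω - R 1 ω})
        ≤ P {ω | R 1 ω = i} * (1 - Q2)^m := by
      intro i
      rcases lt_or_ge i 0 with hi | hi
      · have h0'' : P ({ω | R 1 ω = i} ∩ {ω | (n:ℤ) ≤ R (1+1) ω - R 1 ω}) = 0 := by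
          apply hP0
          rintro ω hgood ⟨h1, _⟩
          obtain ⟨hmk, hsm, h1', h0', hbt⟩ := hgood
          simp only [Set.mem_setOf_eq] at h1
          omega
        rw [h0'']
        exact zero_le
      · have hiz : ((i.toNat : ℕ) : ℤ) = i := Int.toNat_of_nonneg hi
        have hstep : P ({ω | R 1 ω = i} ∩ {ω | (n:ℤ) ≤ R (1+1) ω - R 1 ω})
            ≤ P (Stmt17M.Tup x 0 (i.toNat + t) ⁻¹' Stmt17C.CR1 t i.toNat
                ∩ Stmt17M.NoBlk x t (Stmt17C.CM t) m (i + (t:ℤ))) := by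
          apply hPle
          rintro ω hgood ⟨h1, h2⟩
          obtain ⟨hmk, hsm, h1', h0', hbt⟩ := hgood
          simp only [Set.mem_setOf_eq] at h1 h2
          have hMi : Mark i ω := by rw [← h1]; exact hmk 1
          constructor
          · show Stmt17C.zmark t (Stmt17C.extv (Stmt17M.Tup x 0 (i.toNat+t) ω)) ((i.toNat:ℕ):ℤ)
              ∧ Stmt17C.cntIn t (Stmt17M.Tup x 0 (i.toNat+t) ω) (((i.toNat:ℕ):ℤ) - t + 1) = 0
            rw [hiz]
            constructor
            · rw [Stmt17C.zmark_tup x t Mark hMark ht 0 (i.toNat+t) ω i hi (by push_cast; omega)]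
              rw [zero_add]
              exact hMi
            · rw [Stmt17C.cnt_tup x t Mark hMark ht 0 (i.toNat+t) ω _ (by push_cast; omega)]
              rw [zero_add, hfilter_pos ω i hMi]
              have hc := Stmt17PW.pw_count_pos_of (fun z => Mark z ω) (fun k => R k ω)
                hmk hsm h1' h0' hbt le_rfl h1
              simpa using hc
          · rw [Stmt17M.mem_noBlk]
            intro l hl
            rw [Stmt17C.cM_tup x t Mark hMark ht]
            apply hbt 1
            · have hprod : (0:ℤ) ≤ (t:ℤ) * (l:ℤ) := by positivity
              omega
            · have h9 : t * (n/t) ≤ n := by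
                rw [mul_comm]
                exact Nat.div_mul_le_self n t
              have h6 : l + 2 ≤ n / t := by omega
              have h7 : t * (l + 2) ≤ t * (n / t) := Nat.mul_le_mul_left t h6
              have h8 : t * (l + 2) = t * l + 2 * t := by ring
              have h5 : t * l + t < n := by omega
              have h5' : (t:ℤ) * (l:ℤ) + (t:ℤ) < (n:ℤ) := by exact_mod_cast h5
              omega
        refine le_trans hstep ?_
        have hchain := Stmt17M.chain P x p hmeas hindep hdist t (Stmt17C.CM t) m 0
          (i.toNat + t) (Stmt17C.CR1 t i.toNat)
        rw [show (0:ℤ) + ((i.toNat + t : ℕ) : ℤ) = i + (t:ℤ) from by push_cast; omega,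
          ← hQ2def] at hchain
        rw [hchain]
        apply mul_le_mul_left
        apply hPle
        intro ω hgood hE
        obtain ⟨hmk, hsm, h1', h0', hbt⟩ := hgood
        obtain ⟨hzm, hcnt0⟩ := hE
        rw [Stmt17C.zmark_tup x t Mark hMark ht 0 (i.toNat+t) ω _
          (by omega) (by push_cast; omega), zero_add, hiz] at hzm
        rw [Stmt17C.cnt_tup x t Mark hMark ht 0 (i.toNat+t) ω _ (by push_cast; omega),
          zero_add, hiz, hfilter_pos ω i hzm] at hcnt0
        show R 1 ω = i
        refine (Stmt17PW.pw_count_pos (fun z => Mark z ω) (fun k => R k ω)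
          hmk hsm h1' h0' hbt le_rfl hi).mpr ⟨hzm, ?_⟩
        simpa using hcnt0
    calc ∑' i : ℤ, P ({ω | R 1 ω = i} ∩ {ω | (n:ℤ) ≤ R (1+1) ω - R 1 ω})
        ≤ ∑' i : ℤ, P {ω | R 1 ω = i} * (1-Q2)^m := ENNReal.tsum_le_tsum hterm
      _ = (∑' i : ℤ, P {ω | R 1 ω = i}) * (1-Q2)^m := ENNReal.tsum_mul_right
      _ = 1 * (1-Q2)^m := by
          congr 1
          have h2 := hsum (R 1) (hRmeas 1) Set.univ MeasurableSet.univ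
          simp only [Set.inter_univ] at h2
          rw [← h2, measure_univ]
      _ = (1-Q2)^m := one_mul _
  -- tails of R 1 and R 0
  have tailRpos : ∀ mm : ℕ, P {ω | (mm:ℤ) ≤ R 1 ω} ≤ (1 - Q2)^(mm/t) := by
    intro mm
    have hstep : P {ω | (mm:ℤ) ≤ R 1 ω}
        ≤ P (Stmt17M.NoBlk x t (Stmt17C.CM t) (mm/t) (0 - (t:ℤ) + (t:ℤ))) := by
      apply hPle
      intro ω hgood hω
      obtain ⟨hmk, hsm, h1', h0', hbt⟩ := hgood
      simp only [Set.mem_setOf_eq] at hω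
      rw [Stmt17M.mem_noBlk]
      intro l hl
      rw [Stmt17C.cM_tup x t Mark hMark ht]
      intro hMl
      obtain ⟨mk, hmk'⟩ := Stmt17PW.pw_surj (fun z => Mark z ω) (fun k => R k ω)
        hmk hsm h1' h0' hbt hMl
      have hprod : (0:ℤ) ≤ (t:ℤ) * (l:ℤ) := by positivity
      have hmk1 : 1 ≤ mk := by
        by_contra hc
        push_neg at hc
        have hneg := Stmt17PW.pw_neg (fun k => R k ω) hsm h1' h0' (by omega : mk ≤ 0)
        omega
      have hge : R 1 ω ≤ R mk ω := hsm.monotone hmk1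
      have hlt : (0:ℤ) - t + t + t*l < mm := by
        have h9 : t * (mm/t) ≤ mm := by
          rw [mul_comm]
          exact Nat.div_mul_le_self mm t
        have h7 : t * (l+1) ≤ t * (mm/t) := Nat.mul_le_mul_left t (by omega)
        have h8 : t * (l+1) = t*l + t := by ring
        have h5 : t*l + t ≤ mm := by omega
        have h5' : (t:ℤ)*(l:ℤ) + (t:ℤ) ≤ (mm:ℤ) := by exact_mod_cast h5
        omega
      omega
    refine le_trans hstep ?_
    have hchain := Stmt17M.chain P x p hmeas hindep hdist t (Stmt17C.CM t) (mm/t)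
      (0 - (t:ℤ)) t (Set.univ)
    simp only [Set.preimage_univ, Set.univ_inter, measure_univ, one_mul] at hchain
    rw [← hQ2def] at hchain
    rw [hchain]
  have tailRneg : ∀ mm : ℕ, P {ω | R 0 ω ≤ -(mm:ℤ)} ≤ (1 - Q2)^((mm-1)/t) := by
    intro mm
    set u : ℕ := (mm-1)/t with hudef
    have hstep : P {ω | R 0 ω ≤ -(mm:ℤ)}
        ≤ P (Stmt17M.NoBlk x t (Stmt17C.CM t) u (-((t*u : ℕ):ℤ) - (t:ℤ) + (t:ℤ))) := by
      apply hPle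
      intro ω hgood hω
      obtain ⟨hmk, hsm, h1', h0', hbt⟩ := hgood
      simp only [Set.mem_setOf_eq] at hω
      rw [Stmt17M.mem_noBlk]
      intro l hl
      rw [Stmt17C.cM_tup x t Mark hMark ht]
      have hmm1 : 1 ≤ mm := by
        by_contra hc
        push_neg at hc
        have h0'' : u = 0 := by
          rw [hudef, show mm - 1 = 0 from by omega, Nat.zero_div]
        omega
      have h9 : t * u ≤ mm - 1 := by
        rw [hudef, mul_comm]
        exact Nat.div_mul_le_self (mm-1) t
      have h9' : ((t*u : ℕ) : ℤ) ≤ (mm:ℤ) - 1 := by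
        zify [hmm1] at h9
        exact h9
      have hprod : (0:ℤ) ≤ (t:ℤ) * (l:ℤ) := by positivity
      have h7 : t * (l+1) ≤ t * u := Nat.mul_le_mul_left t (by omega)
      have h8 : t * (l+1) = t*l + t := by ring
      have h7' : (t:ℤ)*(l:ℤ) + (t:ℤ) ≤ ((t*u : ℕ):ℤ) := by
        have h5 : t*l + t ≤ t*u := by omega
        exact_mod_cast h5
      apply hbt 0
      · omega
      · have he1 : R (0+1) ω = R 1 ω := by norm_num
        rw [he1]
        omega
    refine le_trans hstep ?_
    have hchain := Stmt17M.chain P x p hmeas hindep hdist t (Stmt17C.CM t) u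
      (-((t*u : ℕ):ℤ) - (t:ℤ)) t (Set.univ)
    simp only [Set.preimage_univ, Set.univ_inter, measure_univ, one_mul] at hchain
    rw [← hQ2def] at hchain
    rw [hchain]
  have tailC : ∀ n : ℕ, P {ω | (n:ℤ) ≤ R 1 ω - R 0 ω}
      ≤ (1-Q2)^((n/2)/t) + (1-Q2)^((n/2-1)/t) := by
    intro n
    have hsubset : {ω | (n:ℤ) ≤ R 1 ω - R 0 ω}
        ⊆ {ω | ((n/2 : ℕ):ℤ) ≤ R 1 ω} ∪ {ω | R 0 ω ≤ -((n/2 : ℕ):ℤ)} := by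
      intro ω hω
      simp only [Set.mem_setOf_eq, Set.mem_union] at hω ⊢
      by_contra hc
      push_neg at hc
      obtain ⟨hc1, hc2⟩ := hc
      omega
    calc P {ω | (n:ℤ) ≤ R 1 ω - R 0 ω}
        ≤ P ({ω | ((n/2 : ℕ):ℤ) ≤ R 1 ω} ∪ {ω | R 0 ω ≤ -((n/2 : ℕ):ℤ)}) :=
          measure_mono hsubset
      _ ≤ P {ω | ((n/2 : ℕ):ℤ) ≤ R 1 ω} + P {ω | R 0 ω ≤ -((n/2 : ℕ):ℤ)} :=
          measure_union_le _ _
      _ ≤ (1-Q2)^((n/2)/t) + (1-Q2)^((n/2-1)/t) :=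
          add_le_add (tailRpos (n/2)) (tailRneg (n/2))
  -- real-number conversion
  have hQ2ne : Q2 ≠ ⊤ := (hQ2lt1.trans_le le_top).ne
  set q : ℝ := Q2.toReal with hqdef
  have hq0 : 0 < q := ENNReal.toReal_pos hQ2pos.ne' hQ2ne
  have hq1 : q < 1 := by
    have h2 := (ENNReal.toReal_lt_toReal hQ2ne ENNReal.one_ne_top).mpr hQ2lt1
    simpa using h2
  set rr : ℝ := 1 - q with hrrdef
  have hrr0 : 0 < rr := by rw [hrrdef]; linarith
  have hrr1 : rr < 1 := by rw [hrrdef]; linarith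
  have hpow : ∀ m : ℕ, (1 - Q2)^m = ENNReal.ofReal (rr ^ m) := by
    intro m
    rw [ENNReal.ofReal_pow hrr0.le]
    congr 1
    rw [hrrdef, ENNReal.ofReal_sub 1 hq0.le, ENNReal.ofReal_one, hqdef,
      ENNReal.ofReal_toReal hQ2ne]
  obtain ⟨c1, hc1, d1, hd10, hd11, harith1⟩ := stmt17_arith rr hrr0 hrr1 t (by omega)
  obtain ⟨c2, hc2, d2, hd20, hd21, harith2⟩ := stmt17_arith rr hrr0 hrr1 (2*t) (by omega)
  refine ⟨hID, ⟨c1, hc1, d1, hd10, hd11, ?_⟩, ⟨2*c2, by positivity, d2, hd20, hd21, ?_⟩⟩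
  · intro k hk n
    have htr : P {ω | (n:ℤ) ≤ R (k+1) ω - R k ω} = P {ω | (n:ℤ) ≤ R (1+1) ω - R 1 ω} := by
      have hIDk := hID k 1 hk one_ne_zero
      exact hIDk.measure_mem_eq (s := Set.Ici (n:ℤ))
        ((Set.to_countable (Set.Ici (n:ℤ))).measurableSet)
    rw [htr]
    refine le_trans (tail1 n) ?_
    rw [hpow]
    apply ENNReal.ofReal_le_ofReal
    apply harith1
    rcases Nat.eq_zero_or_pos (n / t) with h | h
    · have h2 : n < t := by
        by_contra hc
        push_neg at hc
        have h3 := Nat.div_pos hc (by omega : 0 < t)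
        omega
      have h3 : t * (n/t - 1) = 0 := by rw [h]; simp
      omega
    · have h3 : t * (n/t - 1) + t * 1 = t * (n/t) := by
        rw [← Nat.mul_add]
        congr 1
        omega
      have h4 := Nat.div_add_mod n t
      have h5 : n % t < t := Nat.mod_lt n (by omega)
      set A := t * (n/t - 1) with hA
      set Bv := t * (n/t) with hBv
      set Cm := n % t with hCm
      omega
  · intro n
    refine le_trans (tailC n) ?_
    have hb1 : (1-Q2)^((n/2)/t) ≤ ENNReal.ofReal (c2 * d2 ^ n) := by
      rw [hpow]
      apply ENNReal.ofReal_le_ofReal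
      apply harith2
      have h4 := Nat.div_add_mod (n/2) t
      have h5 : (n/2) % t < t := Nat.mod_lt _ (by omega)
      have h7 : 2*t*((n/2)/t) = 2*(t*((n/2)/t)) := by ring
      rw [h7]
      set A := t * ((n/2)/t) with hA
      set Cm := (n/2) % t with hCm
      omega
    have hb2 : (1-Q2)^((n/2-1)/t) ≤ ENNReal.ofReal (c2 * d2 ^ n) := by
      rw [hpow]
      apply ENNReal.ofReal_le_ofReal
      apply harith2
      have h4 := Nat.div_add_mod (n/2-1) t
      have h5 : (n/2-1) % t < t := Nat.mod_lt _ (by omega)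
      have h7 : 2*t*((n/2-1)/t) = 2*(t*((n/2-1)/t)) := by ring
      rw [h7]
      set A := t * ((n/2-1)/t) with hA
      set Cm := (n/2-1) % t with hCm
      omega
    calc (1-Q2)^((n/2)/t) + (1-Q2)^((n/2-1)/t)
        ≤ ENNReal.ofReal (c2 * d2 ^ n) + ENNReal.ofReal (c2 * d2 ^ n) := add_le_add hb1 hb2
      _ = ENNReal.ofReal (2*c2 * d2 ^ n) := by
          rw [← ENNReal.ofReal_add (by positivity) (by positivity)]
          congr 1
          ring
end
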